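/- arXiv:1402.6064 — 6 statements merged into one kernel-verified Lean document; each statement's English description precedes it below -/
import Mathlib

section
/- Let 0 < y < 1 and let a > 0 with a ∉ [1−√y, 1+√y]; set φ(a) = a + ya/(a−1). Then m₁(φ(a)) = ∫ x/(φ(a)−x) dF_y(x) = 1/(a−1). -/
open MeasureTheory Real
open Set intervalIntegral
open scoped NNReal ENNReal

set_option maxHeartbeats 1000000

lemma sqrt_eq_of_sq {A b : ℝ} (hb : 0 ≤ b) (h : A = b ^ 2) : Real.sqrt A = b := by
  rw [h, Real.sqrt_sq hb]

lemma mp_core_right (m r lam : ℝ) (hr : 0 < r) (hu : r < lam - m) :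
    ∫ x in (m - r)..(m + r), Real.sqrt (r ^ 2 - (x - m) ^ 2) / (lam - x)
      = π * ((lam - m) - Real.sqrt ((lam - m) ^ 2 - r ^ 2)) := by
  have hu0 : (0:ℝ) < lam - m := hr.trans hu
  set u : ℝ := lam - m with hu_def
  have hD2 : 0 < u ^ 2 - r ^ 2 := by nlinarith
  set D : ℝ := Real.sqrt (u ^ 2 - r ^ 2) with hD_def
  have hD0 : 0 < D := Real.sqrt_pos.mpr hD2
  have hDsq : D ^ 2 = u ^ 2 - r ^ 2 := Real.sq_sqrt hD2.le
  have hml : m + r < lam := by linarith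
  set F : ℝ → ℝ := fun x => -Real.sqrt (r ^ 2 - (x - m) ^ 2)
      + u * Real.arcsin ((x - m) / r)
      - D * Real.arcsin ((r ^ 2 - u * (x - m)) / (r * (x - lam))) with hF
  have hcont : ContinuousOn F (Icc (m - r) (m + r)) := by
    apply ContinuousOn.sub
    · apply ContinuousOn.add
      · exact ((Real.continuous_sqrt.comp (by continuity)).neg).continuousOn
      · exact continuousOn_const.mul (Real.continuous_arcsin.comp (by continuity)).continuousOn
    · apply continuousOn_const.mul
      apply Real.continuous_arcsin.comp_continuousOn
      apply ContinuousOn.div (by fun_prop) (by fun_prop)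
      intro x hx
      have hx2 := hx.2
      simp only [Set.mem_Icc] at hx
      exact mul_ne_zero hr.ne' (by linarith [hx.2] : x - lam < 0).ne
  have hderiv : ∀ x ∈ Ioo (m - r) (m + r),
      HasDerivAt F (Real.sqrt (r ^ 2 - (x - m) ^ 2) / (lam - x)) x := by
    intro x hx
    obtain ⟨hx1, hx2⟩ := hx
    have hlx : 0 < lam - x := by linarith
    have hS2 : 0 < r ^ 2 - (x - m) ^ 2 := by nlinarith
    set S : ℝ := Real.sqrt (r ^ 2 - (x - m) ^ 2) with hS_def
    have hS0 : 0 < S := Real.sqrt_pos.mpr hS2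
    have hSsq : S ^ 2 = r ^ 2 - (x - m) ^ 2 := Real.sq_sqrt hS2.le
    have key : (r * (x - lam)) ^ 2 - (r ^ 2 - u * (x - m)) ^ 2
        = (r ^ 2 - (x - m) ^ 2) * (u ^ 2 - r ^ 2) := by rw [hu_def]; ring
    -- piece 1
    have h1 : HasDerivAt (fun x : ℝ => r ^ 2 - (x - m) ^ 2) (-(2 * (x - m))) x := by
      simpa using (((hasDerivAt_id x).sub_const m).pow 2).const_sub (r ^ 2)
    have h1' : HasDerivAt (fun x : ℝ => -Real.sqrt (r ^ 2 - (x - m) ^ 2))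
        ((x - m) / S) x := by
      have := (h1.sqrt hS2.ne').neg
      refine this.congr_deriv ?_
      symm
      rw [← hS_def]
      field_simp
    -- piece 2
    have hxr : (x - m) / r ≠ -1 ∧ (x - m) / r ≠ 1 := by
      constructor <;> intro h <;>
        [have := (div_eq_iff hr.ne').1 h; have := (div_eq_iff hr.ne').1 h] <;> nlinarith
    have hin2 : HasDerivAt (fun x : ℝ => (x - m) / r) (1 / r) x := by
      simpa using ((hasDerivAt_id x).sub_const m).div_const r
    have e1 : Real.sqrt (1 - ((x - m) / r) ^ 2) = S / r := by
      apply sqrt_eq_of_sq (by positivity)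
      rw [div_pow, div_pow, hSsq]
      field_simp
    have h2 : HasDerivAt (fun x : ℝ => u * Real.arcsin ((x - m) / r)) (u / S) x := by
      have := ((Real.hasDerivAt_arcsin hxr.1 hxr.2).comp x hin2).const_mul u
      refine this.congr_deriv ?_
      symm
      rw [e1]
      field_simp
    -- piece 3
    have hxlamne : x - lam ≠ 0 := (by linarith : x - lam < 0).ne
    have hden : r * (x - lam) ≠ 0 := mul_ne_zero hr.ne' hxlamne
    have hnum : HasDerivAt (fun x : ℝ => r ^ 2 - u * (x - m)) (-u) x := by
      simpa using (((hasDerivAt_id x).sub_const m).const_mul u).const_sub (r ^ 2)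
    have hdenD : HasDerivAt (fun x : ℝ => r * (x - lam)) r x := by
      simpa using ((hasDerivAt_id x).sub_const lam).const_mul r
    have hg : HasDerivAt (fun x : ℝ => (r ^ 2 - u * (x - m)) / (r * (x - lam)))
        ((-u * (r * (x - lam)) - (r ^ 2 - u * (x - m)) * r) / (r * (x - lam)) ^ 2) x :=
      hnum.div hdenD hden
    have hgsq : ((r ^ 2 - u * (x - m)) / (r * (x - lam))) ^ 2 < 1 := by
      rw [div_pow, div_lt_one (by positivity)]
      nlinarith [mul_pos hS2 hD2]
    have hgne : (r ^ 2 - u * (x - m)) / (r * (x - lam)) ≠ -1 ∧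
        (r ^ 2 - u * (x - m)) / (r * (x - lam)) ≠ 1 := by
      constructor <;> intro h <;> rw [h] at hgsq <;> norm_num at hgsq
    have e2 : Real.sqrt (1 - ((r ^ 2 - u * (x - m)) / (r * (x - lam))) ^ 2)
        = S * D / (r * (lam - x)) := by
      apply sqrt_eq_of_sq (by positivity)
      have hBne : (r * (x - lam)) ^ 2 ≠ 0 := pow_ne_zero 2 hden
      rw [div_pow]
      rw [show (S * D / (r * (lam - x))) ^ 2 = S ^ 2 * D ^ 2 / (r * (x - lam)) ^ 2 by
        rw [div_pow, show (r * (lam - x)) ^ 2 = (r * (x - lam)) ^ 2 by ring, mul_pow]]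
      rw [hSsq, hDsq, eq_div_iff hBne, sub_mul, div_mul_cancel₀ _ hBne, one_mul]
      linarith [key]
    have key2 : -u * (r * (x - lam)) - (r ^ 2 - u * (x - m)) * r = r * (u ^ 2 - r ^ 2) := by
      rw [hu_def]; ring
    have h3 : HasDerivAt (fun x : ℝ =>
        D * Real.arcsin ((r ^ 2 - u * (x - m)) / (r * (x - lam))))
        ((u ^ 2 - r ^ 2) / (S * (lam - x))) x := by
      have := ((Real.hasDerivAt_arcsin hgne.1 hgne.2).comp x hg).const_mul D
      refine this.congr_deriv ?_
      symm
      rw [e2, key2]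
      have h1ne : lam - x ≠ 0 := hlx.ne'
      field_simp
      ring
    have hsum := (h1'.add h2).sub h3
    refine hsum.congr_deriv ?_
    symm
    have key3 : (x - m + u) * (lam - x) - (u ^ 2 - r ^ 2) = r ^ 2 - (x - m) ^ 2 := by
      rw [hu_def]; ring
    have h1ne : lam - x ≠ 0 := hlx.ne'
    rw [← add_div, div_sub_div _ _ hS0.ne' (mul_ne_zero hS0.ne' h1ne),
      div_eq_div_iff h1ne (mul_ne_zero hS0.ne' (mul_ne_zero hS0.ne' h1ne))]
    linear_combination S * (lam - x) * key3 + S * (lam - x) * hSsq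
  have hint : IntervalIntegrable (fun x => Real.sqrt (r ^ 2 - (x - m) ^ 2) / (lam - x))
      volume (m - r) (m + r) := by
    apply ContinuousOn.intervalIntegrable
    apply ContinuousOn.div (Real.continuous_sqrt.comp (by continuity)).continuousOn
      (by fun_prop)
    intro x hx
    rw [uIcc_of_le (by linarith)] at hx
    simp only [Set.mem_Icc] at hx
    intro h; linarith [hx.2]
  rw [integral_eq_sub_of_hasDerivAt_of_le (by linarith) hcont hderiv hint]
  have harc1 : Real.arcsin ((m + r - m) / r) = π / 2 := by
    rw [show (m + r - m) / r = 1 by field_simp; ring]; exact Real.arcsin_one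
  have harc2 : Real.arcsin ((m - r - m) / r) = -(π / 2) := by
    rw [show (m - r - m) / r = -1 by rw [div_eq_iff hr.ne']; ring]; exact Real.arcsin_neg_one
  have hur1 : u - r > 0 := by linarith
  have hur2 : u + r > 0 := by linarith
  have harc3 : Real.arcsin ((r ^ 2 - u * (m + r - m)) / (r * (m + r - lam))) = π / 2 := by
    rw [show (r ^ 2 - u * (m + r - m)) / (r * (m + r - lam)) = 1 by
      rw [show m + r - lam = -(u - r) by rw [hu_def]; ring,
        div_eq_iff (mul_ne_zero hr.ne' (neg_ne_zero.mpr hur1.ne'))]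
      ring]
    exact Real.arcsin_one
  have harc4 : Real.arcsin ((r ^ 2 - u * (m - r - m)) / (r * (m - r - lam))) = -(π / 2) := by
    rw [show (r ^ 2 - u * (m - r - m)) / (r * (m - r - lam)) = -1 by
      rw [show m - r - lam = -(u + r) by rw [hu_def]; ring,
        div_eq_iff (mul_ne_zero hr.ne' (neg_ne_zero.mpr hur2.ne'))]
      ring]
    exact Real.arcsin_neg_one
  simp only [hF]
  rw [harc1, harc2, harc3, harc4,
    show r ^ 2 - (m + r - m) ^ 2 = 0 by ring, show r ^ 2 - (m - r - m) ^ 2 = 0 by ring,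
    Real.sqrt_zero]
  ring

lemma mp_core_left (m r lam : ℝ) (hr : 0 < r) (hu : lam - m < -r) :
    ∫ x in (m - r)..(m + r), Real.sqrt (r ^ 2 - (x - m) ^ 2) / (lam - x)
      = π * ((lam - m) + Real.sqrt ((lam - m) ^ 2 - r ^ 2)) := by
  have h0 := intervalIntegral.integral_comp_sub_left
    (a := m - r) (b := m + r)
    (fun x => Real.sqrt (r ^ 2 - (x - m) ^ 2) / (lam - x)) (2 * m)
  rw [show 2 * m - (m + r) = m - r by ring, show 2 * m - (m - r) = m + r by ring] at h0
  rw [← h0]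
  have hpt : ∀ x : ℝ, Real.sqrt (r ^ 2 - (2 * m - x - m) ^ 2) / (lam - (2 * m - x))
      = -(Real.sqrt (r ^ 2 - (x - m) ^ 2) / ((2 * m - lam) - x)) := by
    intro x
    rw [show r ^ 2 - (2 * m - x - m) ^ 2 = r ^ 2 - (x - m) ^ 2 by ring,
      show lam - (2 * m - x) = -((2 * m - lam) - x) by ring, div_neg]
  simp only [hpt]
  rw [intervalIntegral.integral_neg, mp_core_right m r (2 * m - lam) hr (by linarith)]
  rw [show (2 * m - lam - m) ^ 2 = (lam - m) ^ 2 by ring]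
  ring


/-- Density of the Marčenko–Pastur distribution with ratio parameter `c` (the absolutely
continuous part; it vanishes outside `[(1-√c)², (1+√c)²]`). -/
noncomputable def mpDensity (c x : ℝ) : ℝ :=
  if (1 - Real.sqrt c) ^ 2 ≤ x ∧ x ≤ (1 + Real.sqrt c) ^ 2 then
    Real.sqrt ((x - (1 - Real.sqrt c) ^ 2) * ((1 + Real.sqrt c) ^ 2 - x)) /
      (2 * Real.pi * c * x)
  else 0

/-- The Marčenko–Pastur law with ratio parameter `c > 0`: an atom of mass `max (1 - 1/c) 0`
at `0` plus the absolutely continuous part with density `mpDensity c`.  For `c < 1` (in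
particular for `c = y ∈ (0,1)`) the atom vanishes and this is the measure `F_y` with density
`(1/(2πxy))√((x-a_y)(b_y-x))` on `[a_y, b_y]`, `a_y = (1-√y)²`, `b_y = (1+√y)²`. -/
noncomputable def mpLaw (c : ℝ) : Measure ℝ :=
  ENNReal.ofReal (1 - 1 / c) • Measure.dirac 0 +
    (volume : Measure ℝ).withDensity fun x => ENNReal.ofReal (mpDensity c x)

/-- The map `φ(a) = a + ya/(a-1)` sending a spike outside `[1-√y, 1+√y]` to the a.s. limit
of the corresponding extreme sample eigenvalue, outside the Marčenko–Pastur support. -/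
noncomputable def phiSpike (y a : ℝ) : ℝ := a + y * a / (a - 1)

/-- `m₁(φ(a)) = ∫ x/(φ(a)−x) dF_y(x) = 1/(a−1)` for a spike `a` outside the bulk. -/
theorem mp_m1_phi (y a : ℝ) (hy0 : 0 < y) (hy1 : y < 1) (ha : 0 < a)
    (hout : a ∉ Set.Icc (1 - Real.sqrt y) (1 + Real.sqrt y)) :
    (∫ x, x / (phiSpike y a - x) ∂mpLaw y) = 1 / (a - 1) := by
  rw [Set.mem_Icc, not_and_or, not_le, not_le] at hout
  set sy := Real.sqrt y with hsy_def
  have hsy0 : 0 < sy := Real.sqrt_pos.mpr hy0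
  have hsy2 : sy ^ 2 = y := Real.sq_sqrt hy0.le
  have hsy1 : sy < 1 := by nlinarith
  set lam := phiSpike y a with hlam_def
  have ha1 : a - 1 ≠ 0 := by
    rcases hout with h | h <;> intro h0 <;> nlinarith
  have hasq : y < (a - 1) ^ 2 := by rcases hout with h | h <;> nlinarith
  have h1a : (1:ℝ) - a ≠ 0 := fun h => ha1 (by linarith)
  -- key identities for lam
  have hu_val : lam - (1 + y) = ((a - 1) ^ 2 + y) / (a - 1) := by
    rw [hlam_def]; unfold phiSpike; field_simp; ring
  have hlam_beta : lam - (1 + sy) ^ 2 = (a - 1 - sy) ^ 2 / (a - 1) := by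
    rw [hlam_def]; unfold phiSpike; field_simp; linear_combination (-a) * hsy2
  have hlam_alpha : lam - (1 - sy) ^ 2 = (a - 1 + sy) ^ 2 / (a - 1) := by
    rw [hlam_def]; unfold phiSpike; field_simp; linear_combination (-a) * hsy2
  -- bounds on lam relative to support
  have hlam_cases : (1 + sy) ^ 2 < lam ∨ lam < (1 - sy) ^ 2 := by
    rcases hout with h | h
    · right
      have h1 : a - 1 < 0 := by linarith
      have h2 : 0 < (a - 1 + sy) ^ 2 := by nlinarith
      have := div_neg_of_pos_of_neg h2 h1
      rw [← hlam_alpha] at this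
      linarith
    · left
      have h1 : 0 < a - 1 := by linarith
      have h2 : 0 < (a - 1 - sy) ^ 2 := pow_pos (by linarith) 2
      have := div_pos h2 h1
      rw [← hlam_beta] at this
      linarith
  have halpha_pos : 0 < (1 - sy) ^ 2 := pow_pos (by linarith) 2
  have hab : (1 - sy) ^ 2 ≤ (1 + sy) ^ 2 := by nlinarith
  have hlamx : ∀ x ∈ Set.Icc ((1 - sy) ^ 2) ((1 + sy) ^ 2), lam - x ≠ 0 := by
    intro x hx
    rcases hlam_cases with h | h
    · have := hx.2; intro h0; simp only [Set.mem_Icc] at hx; nlinarith [hx.2]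
    · intro h0; simp only [Set.mem_Icc] at hx; nlinarith [hx.1]
  -- the atom vanishes
  have hmass : ENNReal.ofReal (1 - 1 / y) = 0 := by
    apply ENNReal.ofReal_eq_zero.mpr
    have : 1 ≤ 1 / y := by rw [le_div_iff₀ hy0]; linarith
    linarith
  have hmu : mpLaw y = (volume : Measure ℝ).withDensity
      fun x => ENNReal.ofReal (mpDensity y x) := by
    unfold mpLaw; rw [hmass, zero_smul, zero_add]
  rw [hmu]
  have hmeas : Measurable fun x => Real.toNNReal (mpDensity y x) := by
    apply measurable_real_toNNReal.comp
    unfold mpDensity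
    exact Measurable.ite
      (measurableSet_Icc (a := (1 - Real.sqrt y) ^ 2) (b := (1 + Real.sqrt y) ^ 2))
      (by fun_prop) measurable_const
  have hcoe : (fun x => ENNReal.ofReal (mpDensity y x))
      = fun x => ((Real.toNNReal (mpDensity y x) : ℝ≥0) : ℝ≥0∞) := rfl
  rw [hcoe, integral_withDensity_eq_integral_smul hmeas]
  have hpt : (fun x => Real.toNNReal (mpDensity y x) • (x / (lam - x)))
      = Set.indicator (Icc ((1 - sy) ^ 2) ((1 + sy) ^ 2))
          (fun x => Real.sqrt ((2 * sy) ^ 2 - (x - (1 + y)) ^ 2) / (lam - x) * (2 * π * y)⁻¹) := by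
    funext x
    rw [NNReal.smul_def, Real.coe_toNNReal']
    by_cases hx : x ∈ Set.Icc ((1 - sy) ^ 2) ((1 + sy) ^ 2)
    · rw [Set.indicator_of_mem hx]
      simp only [Set.mem_Icc] at hx
      unfold mpDensity
      rw [← hsy_def, if_pos hx]
      have hx0 : 0 < x := lt_of_lt_of_le halpha_pos hx.1
      have hd0 : 0 ≤ Real.sqrt ((x - (1 - sy) ^ 2) * ((1 + sy) ^ 2 - x)) / (2 * π * y * x) := by
        positivity
      rw [max_eq_left hd0]
      rw [show (x - (1 - sy) ^ 2) * ((1 + sy) ^ 2 - x)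
          = (2 * sy) ^ 2 - (x - (1 + y)) ^ 2 by linear_combination (2 * x - 2 - y - sy ^ 2) * hsy2]
      have hlx : lam - x ≠ 0 := hlamx x (Set.mem_Icc.mpr hx)
      rw [smul_eq_mul, div_mul_div_comm, show 2 * π * y * x * (lam - x) = x * (2 * π * y * (lam - x)) by ring,
        mul_comm (Real.sqrt ((2 * sy) ^ 2 - (x - (1 + y)) ^ 2)) x, mul_div_mul_left _ _ hx0.ne']
      rw [div_mul_eq_div_div_swap, div_eq_mul_inv _ (2 * π * y)]
    · rw [Set.indicator_of_notMem hx]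
      simp only [Set.mem_Icc] at hx
      unfold mpDensity
      rw [← hsy_def, if_neg hx]
      simp
  rw [hpt, MeasureTheory.integral_indicator measurableSet_Icc, integral_Icc_eq_integral_Ioc,
    ← intervalIntegral.integral_of_le hab, intervalIntegral.integral_mul_const]
  rw [show (1 - sy) ^ 2 = (1 + y) - 2 * sy by linear_combination hsy2,
    show (1 + sy) ^ 2 = (1 + y) + 2 * sy by linear_combination hsy2]
  rcases hlam_cases with hc | hc
  · -- lam above the support
    have hr_lt : 2 * sy < lam - (1 + y) := by nlinarith [hc]
    rw [mp_core_right (1 + y) (2 * sy) lam (by positivity) hr_lt]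
    have h1 : 0 < a - 1 := by
      rcases hout with h | h
      · exfalso
        have hneg : (a - 1 + sy) ^ 2 / (a - 1) < 0 :=
          div_neg_of_pos_of_neg (by nlinarith) (by linarith)
        nlinarith [hc, hlam_alpha, hneg]
      · linarith
    have hD : Real.sqrt ((lam - (1 + y)) ^ 2 - (2 * sy) ^ 2)
        = ((a - 1) ^ 2 - y) / (a - 1) := by
      apply sqrt_eq_of_sq (div_nonneg (by nlinarith) (by linarith))
      rw [hu_val]
      field_simp [ha1, h1a]
      linear_combination (-4 * (a - 1) ^ 2) * hsy2
    rw [hD, hu_val]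
    field_simp [ha1, h1a, Real.pi_ne_zero, hy0.ne']
    ring
  · -- lam below the support
    have hr_lt : lam - (1 + y) < -(2 * sy) := by nlinarith [hc]
    rw [mp_core_left (1 + y) (2 * sy) lam (by positivity) hr_lt]
    have h1 : a - 1 < 0 := by
      rcases hout with h | h
      · linarith
      · exfalso
        have hpos : 0 < (a - 1 - sy) ^ 2 / (a - 1) :=
          div_pos (by nlinarith) (by linarith)
        nlinarith [hc, hlam_beta, hpos]
    have hD : Real.sqrt ((lam - (1 + y)) ^ 2 - (2 * sy) ^ 2)
        = ((a - 1) ^ 2 - y) / (1 - a) := by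
      apply sqrt_eq_of_sq (div_nonneg (by nlinarith) (by linarith))
      rw [hu_val]
      field_simp [ha1, h1a]
      linear_combination (-4 * (a - 1) ^ 2 - 4 * a * (a - 1) ^ 2 * (a - 2)) * hsy2
    rw [hD, hu_val]
    field_simp [ha1, h1a, Real.pi_ne_zero, hy0.ne']
    ring
end

section
/- Let 0 < y < 1 and let a > 0 with a ∉ [1−√y, 1+√y]; set φ(a) = a + ya/(a−1). Then m₂(φ(a)) = ∫ x²/(φ(a)−x)² dF_y(x) = [(a−1) + y(a+1)] / [(a−1)((a−1)² − y)]. -/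
open MeasureTheory Real

open Set

lemma key_deriv (A B L s x : ℝ) (hAB : A < B) (hs2 : s ^ 2 = (L - A) * (L - B)) (hs0 : s ≠ 0)
    (hx : x ∈ Ioo A B) (hsLx : 0 < s * (L - x)) :
    HasDerivAt (fun t =>
    (Real.sqrt ((t - A) * (B - t)) + L * (Real.sqrt ((t - A) * (B - t)) / (L - t))
      - (2 * L - (A + B) / 2) * Real.arcsin ((2 * t - A - B) / (B - A)))
      - ((L * (L - (A + B) / 2) + s ^ 2) / s) *
          Real.arcsin (((B - A) ^ 2 - (2 * L - A - B) * (2 * t - A - B)) / (2 * (B - A) * (L - t))))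
      (x * Real.sqrt ((x - A) * (B - x)) / (L - x) ^ 2) x := by
  obtain ⟨hxA, hxB⟩ := hx
  have hBA : (0:ℝ) < B - A := sub_pos.2 hAB
  have hR : 0 < (x - A) * (B - x) := mul_pos (by linarith) (by linarith)
  set u := Real.sqrt ((x - A) * (B - x)) with hu_def
  have hu0 : 0 < u := Real.sqrt_pos.2 hR
  have hu : u ^ 2 = (x - A) * (B - x) := Real.sq_sqrt hR.le
  have hLxne : L - x ≠ 0 := by
    rintro h; rw [h, mul_zero] at hsLx; exact lt_irrefl 0 hsLx
  have hLx2 : 0 < (L - x) ^ 2 := lt_of_le_of_ne (sq_nonneg _) (Ne.symm (pow_ne_zero 2 hLxne))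
  have hRd : HasDerivAt (fun t => (t - A) * (B - t)) (A + B - 2 * x) x := by
    have := ((hasDerivAt_id x).sub_const A).mul ((hasDerivAt_const x B).sub (hasDerivAt_id x))
    refine this.congr_deriv ?_; simp only [Pi.sub_apply, id_eq]; ring
  have hS : HasDerivAt (fun t => Real.sqrt ((t - A) * (B - t))) ((A + B - 2 * x) / (2 * u)) x :=
    hRd.sqrt hR.ne'
  have hLt : HasDerivAt (fun t => L - t) (0 - 1) x := (hasDerivAt_const x L).sub (hasDerivAt_id x)
  have hG : HasDerivAt (fun t => Real.sqrt ((t - A) * (B - t)) / (L - t))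
      (((A + B - 2 * x) / (2 * u) * (L - x) + u) / (L - x) ^ 2) x := by
    have := hS.div hLt hLxne
    refine this.congr_deriv ?_; ring
  have hv : HasDerivAt (fun t => (2 * t - A - B) / (B - A)) (2 / (B - A)) x := by
    have := ((((hasDerivAt_id x).const_mul 2).sub_const A).sub_const B).div_const (B - A)
    refine this.congr_deriv ?_; ring
  have hv1 : ((2 * x - A - B) / (B - A)) ≠ -1 := by
    intro h; rw [div_eq_iff hBA.ne'] at h; nlinarith
  have hv2 : ((2 * x - A - B) / (B - A)) ≠ 1 := by
    intro h; rw [div_eq_iff hBA.ne'] at h; nlinarith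
  have hsq1 : Real.sqrt (1 - ((2 * x - A - B) / (B - A)) ^ 2) = 2 * u / (B - A) := by
    rw [show 1 - ((2 * x - A - B) / (B - A)) ^ 2 = (2 * u / (B - A)) ^ 2 by
      field_simp; linear_combination (-4:ℝ) * hu]
    exact Real.sqrt_sq (by positivity)
  have hP : HasDerivAt (fun t => Real.arcsin ((2 * t - A - B) / (B - A))) (1 / u) x := by
    have := (Real.hasDerivAt_arcsin hv1 hv2).comp x hv
    rw [hsq1] at this
    refine this.congr_deriv ?_
    field_simp
  -- W and its derivative
  have hNd : HasDerivAt (fun t => (B - A) ^ 2 - (2 * L - A - B) * (2 * t - A - B))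
      (-(2 * (2 * L - A - B))) x := by
    have := (hasDerivAt_const x ((B-A)^2)).sub
      (((((hasDerivAt_id x).const_mul 2).sub_const A).sub_const B).const_mul (2*L-A-B))
    refine this.congr_deriv ?_; ring
  have hDd : HasDerivAt (fun t => 2 * (B - A) * (L - t)) (-(2 * (B - A))) x := by
    have := hLt.const_mul (2 * (B - A))
    refine this.congr_deriv ?_; ring
  have hDne : 2 * (B - A) * (L - x) ≠ 0 := mul_ne_zero (by positivity) hLxne
  have hW : HasDerivAt
      (fun t => ((B - A) ^ 2 - (2 * L - A - B) * (2 * t - A - B)) / (2 * (B - A) * (L - t)))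
      ((-(2 * (2 * L - A - B)) * (2 * (B - A) * (L - x)) -
        ((B - A) ^ 2 - (2 * L - A - B) * (2 * x - A - B)) * (-(2 * (B - A)))) /
        (2 * (B - A) * (L - x)) ^ 2) x := hNd.div hDd hDne
  have hQpos : 0 < 2 * s * u / ((B - A) * (L - x)) := by
    rw [show 2 * s * u / ((B - A) * (L - x))
        = 2 * u * (s * (L - x)) / ((B - A) * (L - x) ^ 2) by field_simp]
    exact div_pos (by positivity) (by positivity)
  have hW2 : 1 - (((B - A) ^ 2 - (2 * L - A - B) * (2 * x - A - B)) / (2 * (B - A) * (L - x))) ^ 2 = (2 * s * u / ((B - A) * (L - x))) ^ 2 := by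
    have e1 : (2 * s * u / ((B - A) * (L - x))) ^ 2
        = 16 * ((L - A) * (L - B)) * ((x - A) * (B - x)) / (2 * (B - A) * (L - x)) ^ 2 := by
      rw [div_pow, mul_pow, mul_pow, hu, hs2,
        div_eq_div_iff (pow_ne_zero 2 (mul_ne_zero hBA.ne' hLxne)) (pow_ne_zero 2 hDne)]
      ring
    rw [e1, div_pow, eq_div_iff (pow_ne_zero 2 hDne)]
    field_simp
    ring
  have hW2pos : 0 < 1 - (((B - A) ^ 2 - (2 * L - A - B) * (2 * x - A - B)) / (2 * (B - A) * (L - x))) ^ 2 := by rw [hW2]; positivity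
  have hWne1 : (((B - A) ^ 2 - (2 * L - A - B) * (2 * x - A - B)) / (2 * (B - A) * (L - x))) ≠ -1 := by intro h; rw [h] at hW2pos; norm_num at hW2pos
  have hWne2 : (((B - A) ^ 2 - (2 * L - A - B) * (2 * x - A - B)) / (2 * (B - A) * (L - x))) ≠ 1 := by intro h; rw [h] at hW2pos; norm_num at hW2pos
  have hsqW : Real.sqrt (1 - (((B - A) ^ 2 - (2 * L - A - B) * (2 * x - A - B)) / (2 * (B - A) * (L - x))) ^ 2) = 2 * s * u / ((B - A) * (L - x)) := by
    rw [hW2]; exact Real.sqrt_sq hQpos.le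
  have hQ : HasDerivAt
      (fun t => Real.arcsin (((B - A) ^ 2 - (2 * L - A - B) * (2 * t - A - B)) /
        (2 * (B - A) * (L - t)))) (-(s / (u * (L - x)))) x := by
    have h := (Real.hasDerivAt_arcsin hWne1 hWne2).comp x hW
    simp only [Function.comp_def] at h
    rw [hsqW] at h
    refine h.congr_deriv ?_
    field_simp
    linear_combination 4 * hs2
  have hFd := ((hS.add (hG.const_mul L)).sub (hP.const_mul (2 * L - (A + B) / 2))).sub
    (hQ.const_mul ((L * (L - (A + B) / 2) + s ^ 2) / s))
  refine hFd.congr_deriv ?_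
  field_simp
  linear_combination (2*L-2*x) * hu + (2*(L-x)) * hs2

lemma key_integral (A B L s : ℝ) (hAB : A < B)
    (hs2 : s ^ 2 = (L - A) * (L - B)) (hsA : 0 < s * (L - A)) (hsB : 0 < s * (L - B)) :
    ∫ x in A..B, x * Real.sqrt ((x - A) * (B - x)) / (L - x) ^ 2
      = π * ((L * (L - (A + B) / 2) + s ^ 2) / s - (2 * L - (A + B) / 2)) := by
  have hBA : B - A ≠ 0 := sub_ne_zero.2 hAB.ne'
  have hs0 : s ≠ 0 := by rintro rfl; simp at hsA
  have hLx : ∀ x ∈ Icc A B, 0 < s * (L - x) := by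
    intro x hx
    rcases lt_trichotomy s 0 with h | h | h
    · have h1 : L - A < 0 := by nlinarith
      have h2 : L - x < 0 := by obtain ⟨h3, h4⟩ := hx; linarith
      exact mul_pos_of_neg_of_neg h h2
    · exact absurd h hs0
    · have h1 : 0 < L - B := by nlinarith
      have h2 : 0 < L - x := by obtain ⟨h3, h4⟩ := hx; linarith
      exact mul_pos h h2
  have hLne : ∀ x ∈ Icc A B, L - x ≠ 0 := fun x hx => by
    have := hLx x hx; rintro h; rw [h, mul_zero] at this; exact lt_irrefl 0 this
  set F : ℝ → ℝ := fun t =>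
    (Real.sqrt ((t - A) * (B - t)) + L * (Real.sqrt ((t - A) * (B - t)) / (L - t))
      - (2 * L - (A + B) / 2) * Real.arcsin ((2 * t - A - B) / (B - A)))
      - ((L * (L - (A + B) / 2) + s ^ 2) / s) *
          Real.arcsin (((B - A) ^ 2 - (2 * L - A - B) * (2 * t - A - B)) / (2 * (B - A) * (L - t)))
    with hF
  have hcontF : ContinuousOn F (Icc A B) := by
    apply ContinuousOn.sub
    apply ContinuousOn.sub
    apply ContinuousOn.add
    · exact (Continuous.sqrt (by continuity)).continuousOn
    · exact continuousOn_const.mul (((Continuous.sqrt (by continuity)).continuousOn).div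
        (by fun_prop) hLne)
    · exact continuousOn_const.mul ((Real.continuous_arcsin.comp_continuousOn (by fun_prop)))
    · refine continuousOn_const.mul (Real.continuous_arcsin.comp_continuousOn
        (ContinuousOn.div (by fun_prop) (by fun_prop) fun x hx => ?_))
      exact mul_ne_zero (mul_ne_zero two_ne_zero hBA) (hLne x hx)
  have hcontf : ContinuousOn (fun x => x * Real.sqrt ((x - A) * (B - x)) / (L - x) ^ 2)
      (Icc A B) := by
    refine ContinuousOn.div (by fun_prop) (by fun_prop) fun x hx => pow_ne_zero 2 (hLne x hx)
  have hftc := intervalIntegral.integral_eq_sub_of_hasDeriv_right_of_le hAB.le hcontF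
    (fun x hx => (key_deriv A B L s x hAB hs2 hs0 hx (hLx x (Ioo_subset_Icc_self hx))).hasDerivWithinAt)
    ((hcontf.mono (by rw [uIcc_of_le hAB.le])).intervalIntegrable)
  rw [hftc, hF]
  -- endpoint simplification
  have e1 : Real.sqrt ((B - A) * (B - B)) = 0 := by simp
  have e2 : Real.sqrt ((A - A) * (B - A)) = 0 := by simp
  have e3 : (2 * B - A - B) / (B - A) = 1 := by rw [div_eq_one_iff_eq hBA]; ring
  have e4 : (2 * A - A - B) / (B - A) = -1 := by
    rw [div_eq_iff hBA]; ring
  have hLB : L - B ≠ 0 := hLne B (right_mem_Icc.2 hAB.le)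
  have hLA : L - A ≠ 0 := hLne A (left_mem_Icc.2 hAB.le)
  have e5 : ((B - A) ^ 2 - (2 * L - A - B) * (2 * B - A - B)) / (2 * (B - A) * (L - B)) = -1 := by
    rw [div_eq_iff (mul_ne_zero (mul_ne_zero two_ne_zero hBA) hLB)]; ring
  have e6 : ((B - A) ^ 2 - (2 * L - A - B) * (2 * A - A - B)) / (2 * (B - A) * (L - A)) = 1 := by
    rw [div_eq_iff (mul_ne_zero (mul_ne_zero two_ne_zero hBA) hLA)]; ring
  simp only [e1, e2, e3, e4, e5, e6, Real.arcsin_one, Real.arcsin_neg_one]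
  ring


lemma mpDensity_nonneg (c : ℝ) (hc : 0 ≤ c) (x : ℝ) : 0 ≤ mpDensity c x := by
  unfold mpDensity
  split
  · next h =>
      have hx0 : (0:ℝ) ≤ x := le_trans (sq_nonneg _) h.1
      have := Real.pi_pos
      positivity
  · exact le_rfl

lemma mpDensity_measurable (c : ℝ) : Measurable (mpDensity c) := by
  unfold mpDensity
  refine Measurable.ite measurableSet_Icc ?_ measurable_const
  exact Measurable.div (by fun_prop) (by fun_prop)

lemma mpDensity_eq_zero {c x : ℝ}
    (h : ¬((1 - Real.sqrt c) ^ 2 ≤ x ∧ x ≤ (1 + Real.sqrt c) ^ 2)) : mpDensity c x = 0 := by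
  unfold mpDensity; rw [if_neg h]


set_option maxHeartbeats 2000000 in
theorem mp_m2_phi_aux (y a : ℝ) (hy0 : 0 < y) (hy1 : y < 1) (ha : 0 < a)
    (hout : a ∉ Set.Icc (1 - Real.sqrt y) (1 + Real.sqrt y)) :
    (∫ x, x ^ 2 / (phiSpike y a - x) ^ 2 ∂mpLaw y) =
      ((a - 1) + y * (a + 1)) / ((a - 1) * ((a - 1) ^ 2 - y)) := by
  have hπ := Real.pi_pos
  set u : ℝ := Real.sqrt y with hu_def
  have hu2 : u ^ 2 = y := Real.sq_sqrt hy0.le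
  have hu0 : 0 < u := Real.sqrt_pos.2 hy0
  have hu1 : u < 1 := by nlinarith
  set A : ℝ := (1 - u) ^ 2 with hA_def
  set B : ℝ := (1 + u) ^ 2 with hB_def
  set L : ℝ := phiSpike y a with hL_def
  have hL : L = a + y * a / (a - 1) := rfl
  clear_value u A B L
  have hcase : a < 1 - u ∨ 1 + u < a := by
    rw [Set.mem_Icc] at hout; push_neg at hout
    rcases lt_or_ge a (1 - u) with h | h
    · exact Or.inl h
    · exact Or.inr (hout h)
  have ht2 : y < (a - 1) ^ 2 := by rcases hcase with h | h <;> nlinarith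
  have ht0 : a - 1 ≠ 0 := by intro h; rw [h] at ht2; nlinarith
  set s : ℝ := ((a - 1) ^ 2 - y) / (a - 1) with hs_def
  clear_value s
  have hs0 : s ≠ 0 := by rw [hs_def]; exact div_ne_zero (by nlinarith) ht0
  have hAB : A < B := by rw [hA_def, hB_def]; nlinarith
  have hA0 : 0 < A := by rw [hA_def]; have : (0:ℝ) < 1 - u := by linarith
                         positivity
  have hs2 : s ^ 2 = (L - A) * (L - B) := by
    rw [hs_def, hL, hA_def, hB_def, ← hu2]; field_simp; ring
  have htu1 : a - 1 + u ≠ 0 := by intro h; nlinarith [sq_nonneg (a - 1 + u)]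
  have htu2 : a - 1 - u ≠ 0 := by intro h; nlinarith [sq_nonneg (a - 1 - u)]
  have hsA : 0 < s * (L - A) := by
    have e : s * (L - A) = ((a - 1) ^ 2 - y) * (a - 1 + u) ^ 2 / (a - 1) ^ 2 := by
      rw [hs_def, hL, hA_def, ← hu2]; field_simp; ring
    rw [e]
    apply div_pos (mul_pos (by nlinarith)
      (lt_of_le_of_ne (sq_nonneg _) (Ne.symm (pow_ne_zero 2 htu1))))
      (lt_of_le_of_ne (sq_nonneg _) (Ne.symm (pow_ne_zero 2 ht0)))
  have hsB : 0 < s * (L - B) := by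
    have e : s * (L - B) = ((a - 1) ^ 2 - y) * (a - 1 - u) ^ 2 / (a - 1) ^ 2 := by
      rw [hs_def, hL, hB_def, ← hu2]; field_simp; ring
    rw [e]
    apply div_pos (mul_pos (by nlinarith)
      (lt_of_le_of_ne (sq_nonneg _) (Ne.symm (pow_ne_zero 2 htu2))))
      (lt_of_le_of_ne (sq_nonneg _) (Ne.symm (pow_ne_zero 2 ht0)))
  have hLxIcc : ∀ x ∈ Set.Icc A B, L - x ≠ 0 := by
    intro x hx
    rcases lt_trichotomy s 0 with h | h | h
    · have h1 : L - x < 0 := by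
        have : L - A < 0 := by nlinarith
        obtain ⟨h3, h4⟩ := hx; linarith
      exact ne_of_lt h1
    · exact absurd h hs0
    · have h1 : 0 < L - x := by
        have : 0 < L - B := by nlinarith
        obtain ⟨h3, h4⟩ := hx; linarith
      exact ne_of_gt h1
  -- measure reduction
  have hmp : mpLaw y
      = (volume : Measure ℝ).withDensity fun x => ENNReal.ofReal (mpDensity y x) := by
    unfold mpLaw
    have h1 : (1:ℝ) ≤ 1 / y := by rw [le_div_iff₀ hy0]; linarith
    rw [ENNReal.ofReal_eq_zero.2 (by linarith), zero_smul, zero_add]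
  have hmeas : Measurable fun x => Real.toNNReal (mpDensity y x) :=
    (mpDensity_measurable y).real_toNNReal
  have step1 : (∫ x, x ^ 2 / (L - x) ^ 2 ∂mpLaw y)
      = ∫ x, mpDensity y x * (x ^ 2 / (L - x) ^ 2) := by
    rw [hmp]
    have : (fun x => ENNReal.ofReal (mpDensity y x))
        = fun x => ((Real.toNNReal (mpDensity y x) : NNReal) : ENNReal) := rfl
    rw [this, integral_withDensity_eq_integral_smul hmeas]
    congr 1; funext x
    rw [NNReal.smul_def, Real.coe_toNNReal _ (mpDensity_nonneg y hy0.le x)]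
    rfl
  have hcond : ∀ x : ℝ, x ∈ Set.Icc A B ↔
      ((1 - Real.sqrt y) ^ 2 ≤ x ∧ x ≤ (1 + Real.sqrt y) ^ 2) := by
    intro x; rw [Set.mem_Icc, hA_def, hB_def, hu_def]
  have step2 : (∫ x, mpDensity y x * (x ^ 2 / (L - x) ^ 2))
      = ∫ x in Set.Icc A B, mpDensity y x * (x ^ 2 / (L - x) ^ 2) := by
    refine (setIntegral_eq_integral_of_forall_compl_eq_zero fun x hx => ?_).symm
    rw [mpDensity_eq_zero (fun h => hx ((hcond x).2 h)), zero_mul]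
  have step3 : (∫ x in Set.Icc A B, mpDensity y x * (x ^ 2 / (L - x) ^ 2))
      = ∫ x in A..B, mpDensity y x * (x ^ 2 / (L - x) ^ 2) := by
    rw [MeasureTheory.integral_Icc_eq_integral_Ioc, intervalIntegral.integral_of_le hAB.le]
  have step4 : (∫ x in A..B, mpDensity y x * (x ^ 2 / (L - x) ^ 2))
      = ∫ x in A..B, (2 * π * y)⁻¹ * (x * Real.sqrt ((x - A) * (B - x)) / (L - x) ^ 2) := by
    refine intervalIntegral.integral_congr fun x hx => ?_
    rw [Set.uIcc_of_le hAB.le] at hx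
    have hx0 : 0 < x := lt_of_lt_of_le hA0 hx.1
    have hLxne : L - x ≠ 0 := hLxIcc x hx
    unfold mpDensity
    rw [if_pos ((hcond x).1 hx)]
    rw [show (x - (1 - Real.sqrt y) ^ 2) * ((1 + Real.sqrt y) ^ 2 - x)
        = (x - A) * (B - x) by rw [hA_def, hB_def, hu_def]]
    field_simp
  rw [step1, step2, step3, step4, intervalIntegral.integral_const_mul,
    key_integral A B L s hAB hs2 hsA hsB]
  have hABsum : A + B = 2 * (1 + y) := by rw [hA_def, hB_def, ← hu2]; ring
  rw [hABsum, hL, hs_def]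
  have hπ0 : (π : ℝ) ≠ 0 := ne_of_gt hπ
  have hy0' : y ≠ 0 := ne_of_gt hy0
  have hst : (a - 1) ^ 2 - y ≠ 0 := by nlinarith
  field_simp
  ring

/-- `m₂(φ(a)) = ∫ x²/(φ(a)−x)² dF_y(x) = ((a−1)+y(a+1)) / ((a−1)((a−1)²−y))`. -/
theorem mp_m2_phi (y a : ℝ) (hy0 : 0 < y) (hy1 : y < 1) (ha : 0 < a)
    (hout : a ∉ Set.Icc (1 - Real.sqrt y) (1 + Real.sqrt y)) :
    (∫ x, x ^ 2 / (phiSpike y a - x) ^ 2 ∂mpLaw y) =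
      ((a - 1) + y * (a + 1)) / ((a - 1) * ((a - 1) ^ 2 - y)) :=
  mp_m2_phi_aux y a hy0 hy1 ha hout
end

section
/- Let 0 < y < 1 and let a > 0 with a ∉ [1−√y, 1+√y]; set φ(a) = a + ya/(a−1). Then m₄(φ(a)) = ∫ 1/(φ(a)−x)² dF_y(x) = (a−1)² / [((a−1)² − y)(a−1+y)²]. -/
open MeasureTheory Real

set_option maxHeartbeats 1600000

open intervalIntegral in
private lemma lemA (c : ℝ) (hc : 1 < c) :
    ∫ t in (-1:ℝ)..1, Real.sqrt (1 - t^2) / (c - t) =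
      Real.pi * (c - Real.sqrt (c^2 - 1)) := by
  set d := Real.sqrt (c^2 - 1) with hddef
  have hd2 : d ^ 2 = c ^ 2 - 1 := Real.sq_sqrt (by nlinarith)
  have hd0 : 0 < d := Real.sqrt_pos.mpr (by nlinarith)
  set F : ℝ → ℝ := fun t => -Real.sqrt (1 - t^2) + c * Real.arcsin t +
    d * Real.arcsin ((1 - c*t)/(c - t)) with hF
  have hsub : ∀ x ∈ Set.Icc (-1:ℝ) 1, c - x ≠ 0 := by
    intro x hx; simp only [Set.mem_Icc] at hx; nlinarith [hx.2]
  have key : ∫ t in (-1:ℝ)..1, Real.sqrt (1 - t^2) / (c - t) = F 1 - F (-1) := by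
    apply integral_eq_sub_of_hasDerivAt_of_le (by norm_num)
    · have c1 : Continuous fun t:ℝ => -Real.sqrt (1 - t^2) := by fun_prop
      have c2 : Continuous fun t:ℝ => c * Real.arcsin t :=
        continuous_const.mul Real.continuous_arcsin
      have c3 : ContinuousOn (fun t:ℝ => d * Real.arcsin ((1 - c*t)/(c-t))) (Set.Icc (-1) 1) := by
        apply ContinuousOn.mul continuousOn_const
        apply Real.continuous_arcsin.comp_continuousOn
        exact ContinuousOn.div (by fun_prop) (by fun_prop) hsub
      exact (c1.continuousOn.add c2.continuousOn).add c3
    · intro t ht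
      simp only [Set.mem_Ioo] at ht
      have hs2 : Real.sqrt (1 - t^2) ^ 2 = 1 - t^2 := Real.sq_sqrt (by nlinarith [ht.1, ht.2])
      set s := Real.sqrt (1 - t^2) with hsdef
      have hs0 : 0 < s := Real.sqrt_pos.mpr (by nlinarith [ht.1, ht.2])
      have hct : 0 < c - t := by linarith [ht.2]
      set v := (1 - c*t)/(c - t) with hvdef
      have hv1 : v < 1 := by
        rw [hvdef, div_lt_one hct]; nlinarith [ht.1, ht.2]
      have hv2 : -1 < v := by
        rw [hvdef, lt_div_iff₀ hct]; nlinarith [ht.1, ht.2]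
      have hsq : Real.sqrt (1 - v^2) = d * s / (c - t) := by
        have h1 : 1 - v^2 = (d * s / (c - t))^2 := by
          rw [hvdef]; field_simp; nlinarith [hs2, hd2]
        rw [h1, Real.sqrt_sq (by positivity)]
      have h1 : HasDerivAt (fun t:ℝ => -Real.sqrt (1 - t^2)) (-((-2*t) / (2*s))) t := by
        have := (HasDerivAt.sqrt (f := fun t:ℝ => 1 - t^2) (f' := -2*t)
          (by simpa using ((hasDerivAt_pow 2 t).const_sub 1))
          (ne_of_gt (by nlinarith [ht.1, ht.2] : (0:ℝ) < 1 - t^2)))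
        exact this.neg
      have h2 : HasDerivAt (fun t:ℝ => c * Real.arcsin t) (c * (1 / Real.sqrt (1 - t^2))) t :=
        (Real.hasDerivAt_arcsin (by linarith [ht.1]) (by linarith [ht.2])).const_mul c
      have hv : HasDerivAt (fun t:ℝ => (1 - c*t)/(c - t))
          (((-c) * (c - t) - (1 - c*t) * (-1)) / (c - t)^2) t := by
        exact HasDerivAt.div (by simpa using ((hasDerivAt_id t).const_mul c).const_sub 1)
          (by simpa using (hasDerivAt_id t).const_sub c) (ne_of_gt hct)
      have h3 : HasDerivAt (fun t:ℝ => d * Real.arcsin ((1 - c*t)/(c - t)))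
          (d * ((1 / Real.sqrt (1 - v^2)) * (((-c) * (c - t) - (1 - c*t) * (-1)) / (c - t)^2))) t := by
        exact ((Real.hasDerivAt_arcsin (ne_of_gt hv2) (ne_of_lt hv1)).comp t hv).const_mul d
      have := (h1.add h2).add h3
      convert this using 1
      · rfl
      rw [hsq, ← hsdef]
      field_simp
      linear_combination hs2
    · apply ContinuousOn.intervalIntegrable
      rw [Set.uIcc_of_le (by norm_num)]
      exact ContinuousOn.div (by fun_prop) (by fun_prop) hsub
  rw [key, hF]
  norm_num
  have e1 : (1 - c) / (c - 1) = -1 := by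
    rw [div_eq_iff (by linarith)]; ring
  have e2 : (1 + c) / (c + 1) = 1 := by
    rw [div_eq_iff (by linarith)]; ring
  rw [e1, e2, Real.arcsin_neg_one, Real.arcsin_one]
  ring

open intervalIntegral in
private lemma lemB (c : ℝ) (hc : 1 < c) :
    ∫ t in (-1:ℝ)..1, Real.sqrt (1 - t^2) / (c - t)^2 =
      Real.pi * (c / Real.sqrt (c^2 - 1) - 1) := by
  set d := Real.sqrt (c^2 - 1) with hddef
  have hd2 : d ^ 2 = c ^ 2 - 1 := Real.sq_sqrt (by nlinarith)
  have hd0 : 0 < d := Real.sqrt_pos.mpr (by nlinarith)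
  set G : ℝ → ℝ := fun t => -Real.arcsin t - (c/d) * Real.arcsin ((1 - c*t)/(c - t)) +
    Real.sqrt (1 - t^2) / (c - t) with hG
  have hsub : ∀ x ∈ Set.Icc (-1:ℝ) 1, c - x ≠ 0 := by
    intro x hx; simp only [Set.mem_Icc] at hx; nlinarith [hx.2]
  have key : ∫ t in (-1:ℝ)..1, Real.sqrt (1 - t^2) / (c - t)^2 = G 1 - G (-1) := by
    apply integral_eq_sub_of_hasDerivAt_of_le (by norm_num)
    · have c1 : Continuous fun t:ℝ => -Real.arcsin t := Real.continuous_arcsin.neg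
      have c2 : ContinuousOn (fun t:ℝ => (c/d) * Real.arcsin ((1 - c*t)/(c-t))) (Set.Icc (-1) 1) := by
        apply ContinuousOn.mul continuousOn_const
        apply Real.continuous_arcsin.comp_continuousOn
        exact ContinuousOn.div (by fun_prop) (by fun_prop) hsub
      have c3 : ContinuousOn (fun t:ℝ => Real.sqrt (1 - t^2) / (c - t)) (Set.Icc (-1) 1) :=
        ContinuousOn.div (by fun_prop) (by fun_prop) hsub
      exact (c1.continuousOn.sub c2).add c3
    · intro t ht
      simp only [Set.mem_Ioo] at ht
      have hs2 : Real.sqrt (1 - t^2) ^ 2 = 1 - t^2 := Real.sq_sqrt (by nlinarith [ht.1, ht.2])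
      set s := Real.sqrt (1 - t^2) with hsdef
      have hs0 : 0 < s := Real.sqrt_pos.mpr (by nlinarith [ht.1, ht.2])
      have hct : 0 < c - t := by linarith [ht.2]
      set v := (1 - c*t)/(c - t) with hvdef
      have hv1 : v < 1 := by
        rw [hvdef, div_lt_one hct]; nlinarith [ht.1, ht.2]
      have hv2 : -1 < v := by
        rw [hvdef, lt_div_iff₀ hct]; nlinarith [ht.1, ht.2]
      have hsq : Real.sqrt (1 - v^2) = d * s / (c - t) := by
        have h1 : 1 - v^2 = (d * s / (c - t))^2 := by
          rw [hvdef]; field_simp; nlinarith [hs2, hd2]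
        rw [h1, Real.sqrt_sq (by positivity)]
      have h1 : HasDerivAt (fun t:ℝ => -Real.arcsin t) (-(1 / Real.sqrt (1 - t^2))) t :=
        (Real.hasDerivAt_arcsin (by linarith [ht.1]) (by linarith [ht.2])).neg
      have hv : HasDerivAt (fun t:ℝ => (1 - c*t)/(c - t))
          (((-c) * (c - t) - (1 - c*t) * (-1)) / (c - t)^2) t := by
        exact HasDerivAt.div (by simpa using ((hasDerivAt_id t).const_mul c).const_sub 1)
          (by simpa using (hasDerivAt_id t).const_sub c) (ne_of_gt hct)
      have h2 : HasDerivAt (fun t:ℝ => (c/d) * Real.arcsin ((1 - c*t)/(c - t)))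
          ((c/d) * ((1 / Real.sqrt (1 - v^2)) * (((-c) * (c - t) - (1 - c*t) * (-1)) / (c - t)^2))) t := by
        exact ((Real.hasDerivAt_arcsin (ne_of_gt hv2) (ne_of_lt hv1)).comp t hv).const_mul (c/d)
      have hsd : HasDerivAt (fun t:ℝ => Real.sqrt (1 - t^2)) ((-2*t) / (2*s)) t := by
        have := (HasDerivAt.sqrt (f := fun t:ℝ => 1 - t^2) (f' := -2*t)
          (by simpa using ((hasDerivAt_pow 2 t).const_sub 1))
          (ne_of_gt (by nlinarith [ht.1, ht.2] : (0:ℝ) < 1 - t^2)))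
        simpa using this
      have h3 : HasDerivAt (fun t:ℝ => Real.sqrt (1 - t^2) / (c - t))
          ((((-2*t) / (2*s)) * (c - t) - s * (-1)) / (c - t)^2) t := by
        exact HasDerivAt.div hsd (by simpa using (hasDerivAt_id t).const_sub c) (ne_of_gt hct)
      have := (h1.sub h2).add h3
      convert this using 1
      · rfl
      rw [hsq, ← hsdef]
      field_simp
      linear_combination (c*(c-t)) * hd2
    · apply ContinuousOn.intervalIntegrable
      rw [Set.uIcc_of_le (by norm_num)]
      exact ContinuousOn.div (by fun_prop) (by fun_prop) (fun x hx => pow_ne_zero 2 (hsub x hx))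
  rw [key, hG]
  norm_num
  have e1 : (1 - c) / (c - 1) = -1 := by
    rw [div_eq_iff (by linarith)]; ring
  have e2 : (1 + c) / (c + 1) = 1 := by
    rw [div_eq_iff (by linarith)]; ring
  rw [e1, e2, Real.arcsin_neg_one, Real.arcsin_one]
  ring

section MpAux
open intervalIntegral

private lemma sqrt_scale {p q : ℝ} (hq : 0 < q) : Real.sqrt ((p/q)^2 - 1) = Real.sqrt (p^2 - q^2) / q := by
  rw [eq_div_iff hq.ne', mul_comm, ← Real.sqrt_sq hq.le, ← Real.sqrt_mul (sq_nonneg q)]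
  congr 1
  field_simp
  rw [Real.sq_sqrt (sq_nonneg q)]

lemma lemApos (p q : ℝ) (hq : 0 < q) (h : q < p) :
    ∫ t in (-1:ℝ)..1, Real.sqrt (1 - t^2) / (p - q*t) =
      Real.pi * (p - Real.sqrt (p^2 - q^2)) / q^2 := by
  have hc : 1 < p / q := (one_lt_div hq).mpr h
  have key : ∀ t : ℝ, Real.sqrt (1 - t^2) / (p - q*t) = (1/q) * (Real.sqrt (1 - t^2) / (p/q - t)) := by
    intro t
    rw [div_mul_div_comm, one_mul]
    congr 1
    field_simp
  simp_rw [key]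
  rw [intervalIntegral.integral_const_mul, lemA _ hc, sqrt_scale hq, div_sub_div_same,
    eq_div_iff (pow_ne_zero 2 hq.ne')]
  field_simp

lemma lemAneg (p q : ℝ) (hq : 0 < q) (h : p < -q) :
    ∫ t in (-1:ℝ)..1, Real.sqrt (1 - t^2) / (p - q*t) =
      Real.pi * (p + Real.sqrt (p^2 - q^2)) / q^2 := by
  have h' : q < -p := by linarith
  have refl : (∫ t in (-1:ℝ)..1, Real.sqrt (1 - t^2) / (p - q*t)) =
      - ∫ t in (-1:ℝ)..1, Real.sqrt (1 - t^2) / (-p - q*t) := by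
    rw [← intervalIntegral.integral_neg]
    have := intervalIntegral.integral_comp_neg (a := (-1:ℝ)) (b := 1)
      (fun t => -(Real.sqrt (1 - t^2) / (-p - q*t)))
    simp only [neg_neg] at this
    rw [← this]
    apply intervalIntegral.integral_congr
    intro t _
    show Real.sqrt (1 - t^2) / (p - q*t) = -(Real.sqrt (1 - (-t)^2) / (-p - q * -t))
    have h1 : 1 - (-t)^2 = 1 - t^2 := by ring
    have h2 : -p - q * -t = -(p - q*t) := by ring
    rw [h1, h2, div_neg, neg_neg]
  rw [refl, lemApos (-p) q hq h']
  have : (-p)^2 - q^2 = p^2 - q^2 := by ring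
  rw [this]
  ring

lemma lemBpos (p q : ℝ) (hq : 0 < q) (h : q < p) :
    ∫ t in (-1:ℝ)..1, Real.sqrt (1 - t^2) / (p - q*t)^2 =
      Real.pi * (p / Real.sqrt (p^2 - q^2) - 1) / q^2 := by
  have hc : 1 < p / q := (one_lt_div hq).mpr h
  have key : ∀ t : ℝ, Real.sqrt (1 - t^2) / (p - q*t)^2 = (1/q^2) * (Real.sqrt (1 - t^2) / (p/q - t)^2) := by
    intro t
    rw [div_mul_div_comm, one_mul]
    congr 1
    field_simp
  simp_rw [key]
  rw [intervalIntegral.integral_const_mul, lemB _ hc, sqrt_scale hq]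
  have hs : 0 < Real.sqrt (p^2 - q^2) := Real.sqrt_pos.mpr (by nlinarith)
  rw [eq_div_iff (pow_ne_zero 2 hq.ne')]
  field_simp

lemma lemBneg (p q : ℝ) (hq : 0 < q) (h : p < -q) :
    ∫ t in (-1:ℝ)..1, Real.sqrt (1 - t^2) / (p - q*t)^2 =
      Real.pi * (-p / Real.sqrt (p^2 - q^2) - 1) / q^2 := by
  have h' : q < -p := by linarith
  have refl : (∫ t in (-1:ℝ)..1, Real.sqrt (1 - t^2) / (p - q*t)^2) =
      ∫ t in (-1:ℝ)..1, Real.sqrt (1 - t^2) / (-p - q*t)^2 := by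
    have := intervalIntegral.integral_comp_neg (a := (-1:ℝ)) (b := 1)
      (fun t => Real.sqrt (1 - t^2) / (-p - q*t)^2)
    simp only [neg_neg] at this
    rw [← this]
    apply intervalIntegral.integral_congr
    intro t _
    show Real.sqrt (1 - t^2) / (p - q*t)^2 = Real.sqrt (1 - (-t)^2) / (-p - q * -t)^2
    have h1 : 1 - (-t)^2 = 1 - t^2 := by ring
    have h2 : (-p - q * -t)^2 = (p - q*t)^2 := by ring
    rw [h1, h2]
  rw [refl, lemBpos (-p) q hq h']
  have : (-p)^2 - q^2 = p^2 - q^2 := by ring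
  rw [this]

end MpAux

/-- `m₄(φ(a)) = ∫ 1/(φ(a)−x)² dF_y(x) = (a−1)² / (((a−1)²−y)(a−1+y)²)`. -/
theorem mp_m4_phi (y a : ℝ) (hy0 : 0 < y) (hy1 : y < 1) (ha : 0 < a)
    (hout : a ∉ Set.Icc (1 - Real.sqrt y) (1 + Real.sqrt y)) :
    (∫ x, 1 / (phiSpike y a - x) ^ 2 ∂mpLaw y) =
      (a - 1) ^ 2 / (((a - 1) ^ 2 - y) * (a - 1 + y) ^ 2) := by
  set sy := Real.sqrt y with hsydef
  have hsy0 : 0 < sy := Real.sqrt_pos.mpr hy0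
  have hsy2 : sy ^ 2 = y := Real.sq_sqrt hy0.le
  have hsy1 : sy < 1 := by
    rw [show (1:ℝ) = Real.sqrt 1 by simp [Real.sqrt_one]]
    exact Real.sqrt_lt_sqrt hy0.le hy1
  set lam := phiSpike y a with hlamdef
  set α := (1 - sy) ^ 2 with hαdef
  set β := (1 + sy) ^ 2 with hβdef
  set m := 1 + y with hmdef
  set r := 2 * sy with hrdef
  have hr0 : 0 < r := by positivity
  have hα : α = m - r := by rw [hαdef, hmdef, hrdef, ← hsy2]; ring
  have hβ : β = m + r := by rw [hβdef, hmdef, hrdef, ← hsy2]; ring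
  have hα0 : 0 < α := by
    rw [hαdef]
    have h1 : 0 < 1 - sy := by linarith
    positivity
  -- case facts
  have hout' : a < 1 - sy ∨ 1 + sy < a := by
    by_contra h
    push_neg at h
    exact hout (Set.mem_Icc.mpr ⟨h.1, h.2⟩)
  have hcase : sy < a - 1 ∨ a - 1 < -sy := by
    rcases hout' with h | h
    · right; linarith
    · left; linarith
  have hb0 : a - 1 ≠ 0 := by
    rcases hcase with h | h
    · nlinarith
    · nlinarith
  have hb2 : y < (a-1)^2 := by
    rcases hcase with h | h
    · nlinarith
    · nlinarith
  have hby : (a - 1) * (a - 1 + y) > 0 := by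
    rcases hcase with h | h
    · have h1 : 0 < a - 1 := by linarith
      nlinarith
    · have h1 : a - 1 < 0 := by linarith
      have h2 : a - 1 + y < 0 := by nlinarith
      nlinarith
  have hu : lam - m = ((a-1)^2 + y) / (a - 1) := by
    rw [hlamdef, hmdef]; unfold phiSpike; field_simp; ring
  have hlam : lam = a * (a - 1 + y) / (a - 1) := by
    rw [hlamdef]; unfold phiSpike; field_simp
  have hlam0 : 0 < lam := by
    rw [hlam]
    rcases hcase with h | h
    · apply div_pos (by nlinarith) (by linarith)
    · have h1 : a - 1 < 0 := by linarith
      have h2 : a - 1 + y < 0 := by nlinarith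
      have : a * (a - 1 + y) < 0 := by nlinarith
      exact div_pos_of_neg_of_neg this h1
  -- |lam - m| > r
  have husq : (lam - m)^2 - r^2 = (((a-1)^2 - y)/(a-1))^2 := by
    rw [hu, hrdef, ← hsy2]; field_simp; ring
  clear_value sy lam α β m r
  have habs : r < |lam - m| := by
    have hne : ((a-1)^2 - y)/(a-1) ≠ 0 := div_ne_zero (ne_of_gt (sub_pos.mpr hb2)) hb0
    have h2 : 0 < (((a-1)^2 - y)/(a-1))^2 :=
      lt_of_le_of_ne (sq_nonneg _) (Ne.symm (pow_ne_zero 2 hne))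
    have h3 : r^2 < (lam - m)^2 := by linarith [h2, husq]
    have h4 : r^2 < |lam - m|^2 := by rwa [sq_abs]
    exact lt_of_pow_lt_pow_left₀ 2 (abs_nonneg _) h4
  -- atom vanishes
  have hatom : ENNReal.ofReal (1 - 1/y) = 0 := by
    rw [ENNReal.ofReal_eq_zero]
    have h1 : 1 < 1/y := by rw [lt_div_iff₀ hy0]; linarith
    linarith
  -- measurability and nonnegativity of the density
  have hmeas0 : Measurable (mpDensity y) := by
    unfold mpDensity
    apply Measurable.ite
    · exact (measurableSet_le measurable_const measurable_id).inter
        (measurableSet_le measurable_id measurable_const)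
    · apply Measurable.div
      · exact Real.continuous_sqrt.measurable.comp (by fun_prop)
      · fun_prop
    · exact measurable_const
  have hnn : ∀ x, 0 ≤ mpDensity y x := by
    intro x
    unfold mpDensity
    split
    · rename_i h
      have hx : 0 < x := lt_of_lt_of_le hα0 (by rw [hαdef, hsydef]; exact h.1)
      exact div_nonneg (Real.sqrt_nonneg _) (by positivity)
    · exact le_refl 0
  -- step 1 : to a Lebesgue integral against the density
  have step1 : (∫ x, 1 / (lam - x) ^ 2 ∂mpLaw y)
      = ∫ x, mpDensity y x * (1 / (lam - x)^2) := by
    rw [mpLaw, hatom, zero_smul, zero_add]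
    rw [show (fun x => ENNReal.ofReal (mpDensity y x))
        = fun x => ((mpDensity y x).toNNReal : ENNReal) from rfl]
    rw [integral_withDensity_eq_integral_smul
      hmeas0.real_toNNReal (fun x => 1 / (lam - x)^2)]
    congr 1
    funext x
    rw [NNReal.smul_def, Real.coe_toNNReal _ (hnn x), smul_eq_mul]
  -- step 2 : to an interval integral
  have hαβ : α ≤ β := by rw [hα, hβ]; linarith
  have step2 : (∫ x, mpDensity y x * (1 / (lam - x)^2))
      = ∫ x in α..β, Real.sqrt ((x - α) * (β - x)) / (2*Real.pi*y*x) * (1 / (lam - x)^2) := by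
    rw [intervalIntegral.integral_of_le hαβ, ← MeasureTheory.integral_Icc_eq_integral_Ioc,
      ← MeasureTheory.integral_indicator measurableSet_Icc]
    congr 1
    funext x
    rw [Set.indicator_apply]
    by_cases h : x ∈ Set.Icc α β
    · rw [if_pos h]
      simp only [mpDensity, ← hsydef, ← hαdef, ← hβdef]
      rw [if_pos (Set.mem_Icc.mp h)]
    · rw [if_neg h]
      simp only [mpDensity, ← hsydef, ← hαdef, ← hβdef]
      rw [if_neg (fun hc => h (Set.mem_Icc.mpr hc)), zero_mul]
  set H : ℝ → ℝ := fun x => Real.sqrt ((x - α) * (β - x)) / (2*Real.pi*y*x) * (1 / (lam - x)^2)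
    with hH
  have hr2 : r^2 = 4*y := by rw [hrdef]; linear_combination 4*hsy2
  -- step 3 : affine substitution
  have step3 : (∫ x in α..β, H x) = r • ∫ t in (-1:ℝ)..1, H (r*t+m) := by
    rw [show α = r*(-1)+m by rw [hα]; ring, show β = r*1+m by rw [hβ]; ring]
    exact (intervalIntegral.smul_integral_comp_mul_add H r m).symm
  -- positivity facts on [-1,1]
  have hxpos : ∀ t ∈ Set.Icc (-1:ℝ) 1, 0 < m + r*t := by
    intro t ht
    rw [Set.mem_Icc] at ht
    nlinarith [hα0, hα, mul_nonneg hr0.le (by linarith : (0:ℝ) ≤ t+1)]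
  have hlne : ∀ t ∈ Set.Icc (-1:ℝ) 1, lam - m - r*t ≠ 0 := by
    intro t ht h
    rw [Set.mem_Icc] at ht
    have h1 : |lam - m| = |r*t| := by rw [show lam - m = r*t by linarith]
    have h2 : |r*t| ≤ r := by
      rw [abs_mul, abs_of_pos hr0]
      nlinarith [abs_le.mpr (⟨ht.1, ht.2⟩ : -1 ≤ t ∧ t ≤ 1), hr0]
    rw [h1] at habs
    linarith
  -- step 4 : pointwise identity (partial fractions)
  have key : Set.EqOn (fun t => H (r*t+m))
      (fun t => (r/(2*Real.pi*y)) * ((1/lam^2) * (Real.sqrt (1-t^2)/(m + r*t))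
        + ((1/lam^2) * (Real.sqrt (1-t^2)/(lam - m - r*t))
        + (1/lam) * (Real.sqrt (1-t^2)/(lam - m - r*t)^2)))) (Set.uIcc (-1) 1) := by
    intro t ht
    rw [Set.uIcc_of_le (by norm_num)] at ht
    have hx0 : 0 < m + r*t := hxpos t ht
    have hlx : lam - m - r*t ≠ 0 := hlne t ht
    have hsqr : Real.sqrt (((r*t+m) - α) * (β - (r*t+m))) = r * Real.sqrt (1-t^2) := by
      rw [show ((r*t+m) - α) * (β - (r*t+m)) = r^2 * (1-t^2) by rw [hα, hβ]; ring,
        Real.sqrt_mul (sq_nonneg r), Real.sqrt_sq hr0.le]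
    show H (r*t+m) = _
    rw [hH]
    simp only
    rw [hsqr, show lam - (r*t+m) = lam - m - r*t by ring]
    obtain ⟨X, hX⟩ : ∃ X, m + r*t = X := ⟨_, rfl⟩
    obtain ⟨W, hW⟩ : ∃ W, lam - m - r*t = W := ⟨_, rfl⟩
    rw [show r*t + m = X by rw [← hX]; ring, hX, hW]
    have hlamXW : lam = X + W := by rw [← hX, ← hW]; ring
    rw [hlamXW]
    have hX0 : X ≠ 0 := hX ▸ hx0.ne'
    have hW0 : W ≠ 0 := hW ▸ hlx
    have hXW0 : X + W ≠ 0 := by rw [← hlamXW]; exact hlam0.ne'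
    field_simp
    ring
  -- the three basic integrals
  have hmr : m^2 - r^2 = (1-y)^2 := by
    rw [hmdef, hrdef]; linear_combination (-4)*hsy2
  have I1 : (∫ t in (-1:ℝ)..1, Real.sqrt (1-t^2)/(m + r*t)) = Real.pi/2 := by
    have hrefl : (∫ t in (-1:ℝ)..1, Real.sqrt (1-t^2)/(m + r*t))
        = ∫ t in (-1:ℝ)..1, Real.sqrt (1-t^2)/(m - r*t) := by
      have h := intervalIntegral.integral_comp_neg (a := (-1:ℝ)) (b := 1)
        (fun t => Real.sqrt (1-t^2)/(m - r*t))
      simp only [neg_neg] at h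
      rw [← h]
      apply intervalIntegral.integral_congr
      intro t _
      show Real.sqrt (1-t^2)/(m + r*t) = Real.sqrt (1-(-t)^2)/(m - r*(-t))
      have e1 : 1 - (-t)^2 = 1 - t^2 := by ring
      have e2 : m - r*(-t) = m + r*t := by ring
      rw [e1, e2]
    rw [hrefl, lemApos m r hr0 (by nlinarith [hα0, hα]), hmr,
      Real.sqrt_sq (by linarith : (0:ℝ) ≤ 1 - y), hr2, hmdef]
    field_simp
    ring
  have hbne : ((a-1)^2 - y) ≠ 0 := ne_of_gt (sub_pos.mpr hb2)
  have husqrt_pos : Real.sqrt ((lam-m)^2 - r^2) = ((a-1)^2 - y)/(a-1) → True := fun _ => trivial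
  have hluexp : lam = m + ((a-1)^2 + y)/(a-1) := by rw [← hu]; ring
  have I2 : (∫ t in (-1:ℝ)..1, Real.sqrt (1-t^2)/(lam - m - r*t)) = Real.pi/(2*(a-1)) := by
    rcases hcase with hcp | hcn
    · have hb1 : 0 < a - 1 := by linarith
      have hplt : r < lam - m := by
        rw [hu, hrdef, lt_div_iff₀ hb1]
        nlinarith [mul_pos (sub_pos.mpr hcp) (sub_pos.mpr hcp), hsy2]
      have hsq2 : Real.sqrt ((lam - m)^2 - r^2) = ((a-1)^2 - y)/(a-1) := by
        rw [husq, Real.sqrt_sq (le_of_lt (div_pos (sub_pos.mpr hb2) hb1))]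
      have h := lemApos (lam - m) r hr0 hplt
      simp only [sub_sub] at h ⊢
      rw [h, hsq2, hr2, hluexp]
      field_simp
      ring
    · have hb1 : a - 1 < 0 := by linarith
      have hplt : lam - m < -r := by
        rw [hu, hrdef, div_lt_iff_of_neg hb1]
        nlinarith [mul_pos_of_neg_of_neg (by linarith : a-1+sy < 0) (by linarith : a-1+sy < 0), hsy2]
      have hsq2 : Real.sqrt ((lam - m)^2 - r^2) = -(((a-1)^2 - y)/(a-1)) := by
        rw [husq, Real.sqrt_sq_eq_abs, abs_of_neg]
        exact div_neg_of_pos_of_neg (sub_pos.mpr hb2) hb1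
      have h := lemAneg (lam - m) r hr0 hplt
      simp only [sub_sub] at h ⊢
      rw [h, hsq2, hr2, hluexp]
      field_simp
      ring
  have I3 : (∫ t in (-1:ℝ)..1, Real.sqrt (1-t^2)/(lam - m - r*t)^2)
      = Real.pi/(2*((a-1)^2 - y)) := by
    rcases hcase with hcp | hcn
    · have hb1 : 0 < a - 1 := by linarith
      have hplt : r < lam - m := by
        rw [hu, hrdef, lt_div_iff₀ hb1]
        nlinarith [mul_pos (sub_pos.mpr hcp) (sub_pos.mpr hcp), hsy2]
      have hsq2 : Real.sqrt ((lam - m)^2 - r^2) = ((a-1)^2 - y)/(a-1) := by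
        rw [husq, Real.sqrt_sq (le_of_lt (div_pos (sub_pos.mpr hb2) hb1))]
      have h := lemBpos (lam - m) r hr0 hplt
      simp only [sub_sub] at h ⊢
      rw [h, hsq2, hr2, hluexp]
      rw [div_eq_div_iff (by positivity) (mul_ne_zero two_ne_zero hbne)]
      field_simp
      ring
    · have hb1 : a - 1 < 0 := by linarith
      have hplt : lam - m < -r := by
        rw [hu, hrdef, div_lt_iff_of_neg hb1]
        nlinarith [mul_pos_of_neg_of_neg (by linarith : a-1+sy < 0) (by linarith : a-1+sy < 0), hsy2]
      have hsq2 : Real.sqrt ((lam - m)^2 - r^2) = -(((a-1)^2 - y)/(a-1)) := by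
        rw [husq, Real.sqrt_sq_eq_abs, abs_of_neg]
        exact div_neg_of_pos_of_neg (sub_pos.mpr hb2) hb1
      have h := lemBneg (lam - m) r hr0 hplt
      simp only [sub_sub] at h ⊢
      have hratio : -(lam - m) / Real.sqrt ((lam-m)^2 - r^2)
          = ((a-1)^2 + y)/((a-1)^2 - y) := by
        rw [hsq2, hu]
        rw [div_eq_div_iff (by simp [hb0, hbne, div_eq_zero_iff] : -(((a-1)^2 - y)/(a-1)) ≠ 0) hbne]
        field_simp
      rw [h, hratio, hr2]
      rw [div_eq_div_iff (by positivity) (mul_ne_zero two_ne_zero hbne)]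
      field_simp [hbne]
      ring
  -- integrability of the three pieces
  have hcont0 : ContinuousOn (fun t:ℝ => Real.sqrt (1-t^2)) (Set.Icc (-1:ℝ) 1) := by fun_prop
  have hint1 : IntervalIntegrable (fun t => Real.sqrt (1-t^2)/(m + r*t)) volume (-1) 1 := by
    apply ContinuousOn.intervalIntegrable
    rw [Set.uIcc_of_le (by norm_num)]
    exact ContinuousOn.div hcont0 (by fun_prop) (fun t ht => (hxpos t ht).ne')
  have hint2 : IntervalIntegrable (fun t => Real.sqrt (1-t^2)/(lam - m - r*t)) volume (-1) 1 := by
    apply ContinuousOn.intervalIntegrable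
    rw [Set.uIcc_of_le (by norm_num)]
    exact ContinuousOn.div hcont0 (by fun_prop) (fun t ht => hlne t ht)
  have hint3 : IntervalIntegrable (fun t => Real.sqrt (1-t^2)/(lam - m - r*t)^2) volume (-1) 1 := by
    apply ContinuousOn.intervalIntegrable
    rw [Set.uIcc_of_le (by norm_num)]
    exact ContinuousOn.div hcont0 (by fun_prop) (fun t ht => pow_ne_zero 2 (hlne t ht))
  -- assemble
  have hbyne : a - 1 + y ≠ 0 := by
    intro h
    rw [h, mul_zero] at hby
    exact lt_irrefl 0 hby
  rw [step1, step2, step3, intervalIntegral.integral_congr key,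
    intervalIntegral.integral_const_mul,
    intervalIntegral.integral_add (hint1.const_mul _) ((hint2.const_mul _).add (hint3.const_mul _)),
    intervalIntegral.integral_add (hint2.const_mul _) (hint3.const_mul _),
    intervalIntegral.integral_const_mul, intervalIntegral.integral_const_mul,
    intervalIntegral.integral_const_mul, I1, I2, I3, smul_eq_mul, hlam]
  have hrr : r * (r / (2*Real.pi*y)) = 2/Real.pi := by
    rw [show r * (r/(2*Real.pi*y)) = r^2/(2*Real.pi*y) by ring, hr2]
    rw [div_eq_div_iff (by positivity) Real.pi_ne_zero]
    ring
  rw [← mul_assoc, hrr]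
  have hlamne : a * (a - 1 + y) / (a - 1) ≠ 0 :=
    div_ne_zero (mul_ne_zero ha.ne' hbyne) hb0
  field_simp
  ring
end

section
/- Let 0 < y < 1 and let a > 0 with a ∉ [1−√y, 1+√y]; set φ(a) = a + ya/(a−1). Then m₅(φ(a)) = ∫ x/(φ(a)−x)³ dF_y(x) = (a−1)³ / ((a−1)² − y)³. -/
open MeasureTheory Real intervalIntegral Set

set_option maxHeartbeats 2000000 in
lemma mp_core (r p : ℝ) (hr : 0 < r) (hp : r < p) :
    ∫ u in (-r)..r, Real.sqrt (r ^ 2 - u ^ 2) / (p - u) ^ 3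
      = π * r ^ 2 / (2 * (p ^ 2 - r ^ 2) * Real.sqrt (p ^ 2 - r ^ 2)) := by
  have hD : 0 < p ^ 2 - r ^ 2 := by nlinarith
  set D : ℝ := p ^ 2 - r ^ 2 with hDdef
  set sD : ℝ := Real.sqrt D with hsDdef
  have hsD : 0 < sD := Real.sqrt_pos.2 hD
  have hsD2 : sD ^ 2 = D := Real.sq_sqrt hD.le
  set G : ℝ → ℝ := fun u =>
    -(r ^ 2) * Real.arcsin ((r ^ 2 - p * u) / (r * (p - u))) / (2 * D * sD)
      - p * Real.sqrt (r ^ 2 - u ^ 2) / (2 * D * (p - u))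
      + Real.sqrt (r ^ 2 - u ^ 2) / (2 * (p - u) ^ 2) with hGdef
  have hpu : ∀ u : ℝ, u ∈ Icc (-r) r → 0 < p - u := fun u hu => by
    have := hu.2; linarith
  have hcont : ContinuousOn G (Icc (-r) r) := by
    apply ContinuousOn.add
    apply ContinuousOn.sub
    · apply ContinuousOn.div
      · exact continuousOn_const.mul (Real.continuous_arcsin.comp_continuousOn
          (ContinuousOn.div (continuous_const.sub (continuous_const.mul continuous_id)).continuousOn
            (continuous_const.mul (continuous_const.sub continuous_id)).continuousOn
            (fun u hu => by have := hpu u hu; positivity)))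
      · exact continuousOn_const
      · intro u _; positivity
    · apply ContinuousOn.div
      · exact (continuous_const.mul ((continuous_const.sub (continuous_pow 2)).sqrt)).continuousOn
      · exact (continuous_const.mul (continuous_const.sub continuous_id)).continuousOn
      · intro u hu; have := hpu u hu; positivity
    · apply ContinuousOn.div
      · exact ((continuous_const.sub (continuous_pow 2)).sqrt).continuousOn
      · exact (continuous_const.mul ((continuous_const.sub continuous_id).pow 2)).continuousOn
      · intro u hu; have := hpu u hu; positivity
  have key : ∀ u ∈ Ioo (-r) r, HasDerivAt G (Real.sqrt (r ^ 2 - u ^ 2) / (p - u) ^ 3) u := by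
    intro u hu
    have hur : -r < u := hu.1
    have hur' : u < r := hu.2
    have hpu' : 0 < p - u := by linarith
    have hwpos : 0 < r ^ 2 - u ^ 2 := by nlinarith
    set w : ℝ := Real.sqrt (r ^ 2 - u ^ 2) with hwdef
    have hw0 : 0 < w := Real.sqrt_pos.2 hwpos
    have hw2 : w ^ 2 = r ^ 2 - u ^ 2 := Real.sq_sqrt hwpos.le
    have hden : r * (p - u) ≠ 0 := by positivity
    have h1mh : 1 - ((r ^ 2 - p * u) / (r * (p - u))) ^ 2 = (sD * w / (r * (p - u))) ^ 2 := by
      rw [div_pow, div_pow, mul_pow sD w]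
      rw [hsD2, hw2, hDdef]
      field_simp
      ring
    have hhsq : ((r ^ 2 - p * u) / (r * (p - u))) ^ 2 < 1 := by
      nlinarith [h1mh, pow_pos (div_pos (mul_pos hsD hw0) (by positivity : (0:ℝ) < r * (p - u))) 2]
    have hne1 : (r ^ 2 - p * u) / (r * (p - u)) ≠ -1 := by
      intro e; rw [e] at hhsq; norm_num at hhsq
    have hne2 : (r ^ 2 - p * u) / (r * (p - u)) ≠ 1 := by
      intro e; rw [e] at hhsq; norm_num at hhsq
    have hsqrt1mh : Real.sqrt (1 - ((r ^ 2 - p * u) / (r * (p - u))) ^ 2)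
        = sD * w / (r * (p - u)) := by
      rw [h1mh, Real.sqrt_sq (by positivity)]
    have d1 : HasDerivAt (fun v : ℝ => r ^ 2 - p * v) (-p) u := by
      simpa using ((hasDerivAt_id u).const_mul p).const_sub (r ^ 2)
    have d2 : HasDerivAt (fun v : ℝ => r * (p - v)) (-r) u := by
      simpa using ((hasDerivAt_const u p).sub (hasDerivAt_id u)).const_mul r
    have hinner : HasDerivAt (fun v : ℝ => (r ^ 2 - p * v) / (r * (p - v)))
        ((-p * (r * (p - u)) - (r ^ 2 - p * u) * -r) / (r * (p - u)) ^ 2) u := d1.div d2 hden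
    have harcsin : HasDerivAt (fun v : ℝ => Real.arcsin ((r ^ 2 - p * v) / (r * (p - v))))
        (1 / Real.sqrt (1 - ((r ^ 2 - p * u) / (r * (p - u))) ^ 2) *
          ((-p * (r * (p - u)) - (r ^ 2 - p * u) * -r) / (r * (p - u)) ^ 2)) u :=
      by have := (Real.hasDerivAt_arcsin hne1 hne2).comp u hinner; exact this
    have dsq : HasDerivAt (fun v : ℝ => r ^ 2 - v ^ 2) (-(2 * u)) u := by
      simpa using (hasDerivAt_pow 2 u).const_sub (r ^ 2)
    have hsqrtw : HasDerivAt (fun v : ℝ => Real.sqrt (r ^ 2 - v ^ 2))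
        (1 / (2 * w) * -(2 * u)) u :=
      (Real.hasDerivAt_sqrt (ne_of_gt hwpos)).comp u dsq
    have hT1 : HasDerivAt (fun v : ℝ =>
        -(r ^ 2) * Real.arcsin ((r ^ 2 - p * v) / (r * (p - v))) / (2 * D * sD))
        (-(r ^ 2) * (1 / Real.sqrt (1 - ((r ^ 2 - p * u) / (r * (p - u))) ^ 2) *
          ((-p * (r * (p - u)) - (r ^ 2 - p * u) * -r) / (r * (p - u)) ^ 2)) / (2 * D * sD)) u :=
      (harcsin.const_mul (-(r ^ 2))).div_const (2 * D * sD)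
    have dden2 : HasDerivAt (fun v : ℝ => 2 * D * (p - v)) (-(2 * D)) u := by
      simpa using ((hasDerivAt_const u p).sub (hasDerivAt_id u)).const_mul (2 * D)
    have hT2 : HasDerivAt (fun v : ℝ => p * Real.sqrt (r ^ 2 - v ^ 2) / (2 * D * (p - v)))
        ((p * (1 / (2 * w) * -(2 * u)) * (2 * D * (p - u)) -
          p * w * -(2 * D)) / (2 * D * (p - u)) ^ 2) u :=
      (hsqrtw.const_mul p).div dden2 (by positivity)
    have dden3 : HasDerivAt (fun v : ℝ => 2 * (p - v) ^ 2) (2 * (2 * (p - u) ^ 1 * -1)) u := by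
      simpa using (((hasDerivAt_const u p).sub (hasDerivAt_id u)).pow 2).const_mul 2
    have hT3 : HasDerivAt (fun v : ℝ => Real.sqrt (r ^ 2 - v ^ 2) / (2 * (p - v) ^ 2))
        ((1 / (2 * w) * -(2 * u) * (2 * (p - u) ^ 2) -
          w * (2 * (2 * (p - u) ^ 1 * -1))) / (2 * (p - u) ^ 2) ^ 2) u :=
      hsqrtw.div dden3 (by positivity)
    have hT1' : HasDerivAt (fun v : ℝ =>
        -(r ^ 2) * Real.arcsin ((r ^ 2 - p * v) / (r * (p - v))) / (2 * D * sD))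
        (r ^ 2 / (2 * D * ((p - u) * w))) u := by
      convert hT1 using 1
      have hsD2' : sD ^ 2 = p ^ 2 - r ^ 2 := hsD2.trans hDdef
      rw [hsqrt1mh]
      field_simp
      linear_combination hsD2'
    have hT2' : HasDerivAt (fun v : ℝ => p * Real.sqrt (r ^ 2 - v ^ 2) / (2 * D * (p - v)))
        (p * (w ^ 2 - u * (p - u)) / (2 * D * (w * (p - u) ^ 2))) u := by
      convert hT2 using 1
      field_simp
      ring
    have hT3' : HasDerivAt (fun v : ℝ => Real.sqrt (r ^ 2 - v ^ 2) / (2 * (p - v) ^ 2))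
        ((2 * w ^ 2 - u * (p - u)) / (2 * (w * (p - u) ^ 3))) u := by
      convert hT3 using 1
      field_simp
      ring
    have htot : HasDerivAt G _ u := (hT1'.sub hT2').add hT3'
    convert htot using 1
    have hne : p - u ≠ 0 := ne_of_gt hpu'
    have hwne : w ≠ 0 := ne_of_gt hw0
    have hDne : p ^ 2 - (w ^ 2 + u ^ 2) ≠ 0 := by
      rw [show w ^ 2 + u ^ 2 = r ^ 2 by linarith [hw2]]; exact ne_of_gt (hDdef ▸ hD)
    rw [hDdef, show r ^ 2 = w ^ 2 + u ^ 2 by linarith [hw2]]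
    field_simp
    ring
  have hint : IntervalIntegrable (fun u => Real.sqrt (r ^ 2 - u ^ 2) / (p - u) ^ 3)
      volume (-r) r := by
    apply ContinuousOn.intervalIntegrable
    rw [Set.uIcc_of_le (by linarith)]
    exact ContinuousOn.div ((continuous_const.sub (continuous_pow 2)).sqrt).continuousOn
      ((continuous_const.sub continuous_id).pow 3).continuousOn
      (fun u hu => by have := hpu u hu; positivity)
  rw [intervalIntegral.integral_eq_sub_of_hasDeriv_right_of_le (by linarith) hcont
    (fun u hu => (key u hu).hasDerivWithinAt) hint]
  have e1 : Real.sqrt (r ^ 2 - r ^ 2) = 0 := by simp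
  have e2 : Real.sqrt (r ^ 2 - (-r) ^ 2) = 0 := by simp
  have a1 : (r ^ 2 - p * r) / (r * (p - r)) = -1 := by
    rw [div_eq_iff (ne_of_gt (mul_pos hr (by linarith)))]; ring
  have a2 : (r ^ 2 - p * -r) / (r * (p - -r)) = 1 := by
    rw [div_eq_iff (ne_of_gt (mul_pos hr (by linarith)))]; ring
  rw [hGdef]
  simp only [e1, e2, a1, a2, Real.arcsin_neg_one, Real.arcsin_one]
  rw [hDdef, hsDdef]
  field_simp
  ring


lemma mp_core' (r p : ℝ) (hr : 0 < r) (hp : p < -r) :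
    ∫ u in (-r)..r, Real.sqrt (r ^ 2 - u ^ 2) / (p - u) ^ 3
      = -(π * r ^ 2 / (2 * (p ^ 2 - r ^ 2) * Real.sqrt (p ^ 2 - r ^ 2))) := by
  have h := mp_core r (-p) hr (by linarith)
  have e : ∀ u : ℝ, Real.sqrt (r ^ 2 - u ^ 2) / (p - u) ^ 3
      = -((fun v => Real.sqrt (r ^ 2 - v ^ 2) / (-p - v) ^ 3) (-u)) := by
    intro u
    simp only
    rw [show (-p - -u : ℝ) ^ 3 = -((p - u) ^ 3) by ring, div_neg, neg_neg, neg_sq]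
  calc ∫ u in (-r)..r, Real.sqrt (r ^ 2 - u ^ 2) / (p - u) ^ 3
      = ∫ u in (-r)..r, -((fun v => Real.sqrt (r ^ 2 - v ^ 2) / (-p - v) ^ 3) (-u)) := by
        simp_rw [← e]
    _ = -∫ u in (-r)..r, (fun v => Real.sqrt (r ^ 2 - v ^ 2) / (-p - v) ^ 3) (-u) :=
        intervalIntegral.integral_neg
    _ = -∫ u in (-r)..(- -r), Real.sqrt (r ^ 2 - u ^ 2) / (-p - u) ^ 3 := by
        rw [intervalIntegral.integral_comp_neg (fun v => Real.sqrt (r ^ 2 - v ^ 2) / (-p - v) ^ 3)]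
    _ = -(π * r ^ 2 / (2 * (p ^ 2 - r ^ 2) * Real.sqrt (p ^ 2 - r ^ 2))) := by
        rw [neg_neg, h]
        norm_num

set_option maxHeartbeats 1000000 in
/-- `m₅(φ(a)) = ∫ x/(φ(a)−x)³ dF_y(x) = (a−1)³ / ((a−1)²−y)³`. -/
theorem mp_m5_phi (y a : ℝ) (hy0 : 0 < y) (hy1 : y < 1) (ha : 0 < a)
    (hout : a ∉ Set.Icc (1 - Real.sqrt y) (1 + Real.sqrt y)) :
    (∫ x, x / (phiSpike y a - x) ^ 3 ∂mpLaw y) = (a - 1) ^ 3 / ((a - 1) ^ 2 - y) ^ 3 := by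
  set s : ℝ := Real.sqrt y with hsdef
  have hs0 : 0 < s := Real.sqrt_pos.2 hy0
  have hs1 : s < 1 := by
    rw [hsdef, show (1:ℝ) = Real.sqrt 1 by simp]
    exact Real.sqrt_lt_sqrt hy0.le hy1
  have hs2 : s ^ 2 = y := Real.sq_sqrt hy0.le
  set A : ℝ := (1 - s) ^ 2 with hAdef
  set B : ℝ := (1 + s) ^ 2 with hBdef
  have hA0 : 0 < A := by rw [hAdef]; nlinarith
  set lam : ℝ := phiSpike y a with hlamdef
  set p : ℝ := lam - (1 + y) with hpdef
  set r : ℝ := 2 * s with hrdef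
  have hr0 : 0 < r := by positivity
  have hAcr : A = (1 + y) - r := by rw [hAdef, hrdef, ← hs2]; ring
  have hBcr : B = (1 + y) + r := by rw [hBdef, hrdef, ← hs2]; ring
  -- step 1 : kill the atom
  have hatom : ENNReal.ofReal (1 - 1 / y) = 0 := by
    rw [ENNReal.ofReal_eq_zero]
    have : 1 ≤ 1 / y := by rw [le_div_iff₀ hy0]; linarith
    linarith
  have hmeas : Measurable fun x => (mpDensity y x).toNNReal := by
    apply Measurable.real_toNNReal
    unfold mpDensity
    refine Measurable.ite measurableSet_Icc ?_ measurable_const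
    exact (((continuous_id.sub continuous_const).mul
      (continuous_const.sub continuous_id)).sqrt.measurable).div
      ((continuous_const.mul continuous_id).measurable)
  have hlaw : (∫ x, x / (lam - x) ^ 3 ∂mpLaw y)
      = ∫ x, x / (lam - x) ^ 3 ∂((volume : Measure ℝ).withDensity
          fun x => ENNReal.ofReal (mpDensity y x)) := by
    unfold mpLaw
    rw [hatom, zero_smul, zero_add]
  have hofReal : (fun x => ENNReal.ofReal (mpDensity y x))
      = fun x => ((mpDensity y x).toNNReal : ENNReal) := rfl
  have hwd : (∫ x, x / (lam - x) ^ 3 ∂((volume : Measure ℝ).withDensity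
        fun x => ENNReal.ofReal (mpDensity y x)))
      = ∫ x, (mpDensity y x).toNNReal • (x / (lam - x) ^ 3) := by
    rw [hofReal]
    exact integral_withDensity_eq_integral_smul hmeas _
  have hd_nonneg : ∀ x, 0 ≤ mpDensity y x := by
    intro x
    unfold mpDensity
    split
    · next hx =>
      have hx0 : 0 < x := lt_of_lt_of_le hA0 hx.1
      have : (0:ℝ) < 2 * π * y * x := by positivity
      positivity
    · exact le_refl 0
  have hAB : A ≤ B := by nlinarith
  set g : ℝ → ℝ := fun t => Real.sqrt ((t - A) * (B - t)) / (2 * π * y * (lam - t) ^ 3)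
    with hgdef
  have hsmul : (fun x => (mpDensity y x).toNNReal • (x / (lam - x) ^ 3))
      = Set.indicator (Set.Icc A B) g := by
    funext x
    rw [NNReal.smul_def, Real.coe_toNNReal _ (hd_nonneg x)]
    unfold mpDensity
    rw [← hsdef]
    by_cases hx : x ∈ Set.Icc A B
    · rw [Set.indicator_of_mem hx, if_pos (Set.mem_Icc.1 hx), hgdef]
      have hx0 : x ≠ 0 := ne_of_gt (lt_of_lt_of_le hA0 hx.1)
      rw [smul_eq_mul, ← hAdef, ← hBdef]
      simp only
      rw [div_mul_div_comm,
        show Real.sqrt ((x - A) * (B - x)) * x = x * Real.sqrt ((x - A) * (B - x)) by ring,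
        show (2 * π * y * x) * (lam - x) ^ 3 = x * (2 * π * y * (lam - x) ^ 3) by ring,
        mul_div_mul_left _ _ hx0]
    · rw [Set.indicator_of_notMem hx, if_neg (by simpa [Set.mem_Icc] using hx), zero_smul]
  have hind : (∫ x, (mpDensity y x).toNNReal • (x / (lam - x) ^ 3))
      = ∫ x in A..B, g x := by
    rw [hsmul, MeasureTheory.integral_indicator measurableSet_Icc,
      MeasureTheory.integral_Icc_eq_integral_Ioc, intervalIntegral.integral_of_le hAB]
  have hpull : (∫ x in A..B, g x)
      = (2 * π * y)⁻¹ * ∫ t in A..B, Real.sqrt ((t - A) * (B - t)) / (lam - t) ^ 3 := by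
    rw [← intervalIntegral.integral_const_mul]
    apply intervalIntegral.integral_congr
    intro t _
    rw [hgdef]
    simp only
    rw [inv_mul_eq_div, div_div]
    ring_nf
  have htrans : (∫ t in A..B, Real.sqrt ((t - A) * (B - t)) / (lam - t) ^ 3)
      = ∫ u in (-r)..r, Real.sqrt (r ^ 2 - u ^ 2) / (p - u) ^ 3 := by
    symm
    calc ∫ u in (-r)..r, Real.sqrt (r ^ 2 - u ^ 2) / (p - u) ^ 3
        = ∫ u in (-r)..r,
            (fun t => Real.sqrt ((t - A) * (B - t)) / (lam - t) ^ 3) (u + (1 + y)) := by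
          apply intervalIntegral.integral_congr
          intro u _
          simp only
          rw [show u + (1 + y) - A = r + u by rw [hAcr]; ring,
            show B - (u + (1 + y)) = r - u by rw [hBcr]; ring,
            show lam - (u + (1 + y)) = p - u by rw [hpdef]; ring,
            show (r + u) * (r - u) = r ^ 2 - u ^ 2 by ring]
      _ = ∫ t in (-r + (1 + y))..(r + (1 + y)),
            Real.sqrt ((t - A) * (B - t)) / (lam - t) ^ 3 :=
          by rw [intervalIntegral.integral_comp_add_right
              (fun t => Real.sqrt ((t - A) * (B - t)) / (lam - t) ^ 3) (1 + y)]
      _ = ∫ t in A..B, Real.sqrt ((t - A) * (B - t)) / (lam - t) ^ 3 := by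
          rw [show -r + (1 + y) = A by rw [hAcr]; ring, show r + (1 + y) = B by rw [hBcr]; ring]
  rw [hlaw, hwd, hind, hpull, htrans]
  -- arithmetic facts about p
  have h' : a < 1 - s ∨ 1 + s < a := by
    have := hout
    simp only [Set.mem_Icc, not_and_or, not_le] at this
    exact this
  have hane : a - 1 ≠ 0 := by rcases h' with h | h <;> [nlinarith; nlinarith]
  have hpval : p * (a - 1) = (a - 1) ^ 2 + y := by
    rw [hpdef, hlamdef]
    unfold phiSpike
    field_simp
    ring
  have hq : 0 < (a - 1) ^ 2 - y := by
    rcases h' with h | h <;> nlinarith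
  have hD_eq : p ^ 2 - r ^ 2 = (((a - 1) ^ 2 - y) / (a - 1)) ^ 2 := by
    rw [hrdef, div_pow, eq_div_iff (pow_ne_zero 2 hane)]
    have h4 : (2 * s) ^ 2 = 4 * y := by rw [mul_pow]; rw [hs2]; ring
    nlinarith [hpval, h4]
  rcases h' with h | h
  · -- a < 1 - s : p < -r
    have h1a : s < 1 - a := by linarith
    have hpr : p < -r := by
      have key : (-p - r) * (1 - a) = ((1 - a) - s) ^ 2 := by nlinarith [hpval, hs2]
      nlinarith [sq_nonneg ((1 - a) - s), key]
    rw [mp_core' r p hr0 hpr]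
    have hsqrtD : Real.sqrt (p ^ 2 - r ^ 2) = ((a - 1) ^ 2 - y) / (1 - a) := by
      have h1a' : (0:ℝ) < 1 - a := by linarith
      have hq' : (0:ℝ) < (1 - a) ^ 2 - y := by nlinarith
      rw [hD_eq, div_pow, show ((a:ℝ) - 1) ^ 2 = (1 - a) ^ 2 by ring, ← div_pow,
        Real.sqrt_sq (le_of_lt (div_pos hq' h1a'))]
    rw [hsqrtD, hD_eq, hrdef]
    have h4 : (2 * s) ^ 2 = 4 * y := by rw [mul_pow]; rw [hs2]; ring
    rw [h4]
    have hπ : (π : ℝ) ≠ 0 := Real.pi_ne_zero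
    have hqne : (a - 1) ^ 2 - y ≠ 0 := ne_of_gt hq
    have hyne : y ≠ 0 := ne_of_gt hy0
    field_simp
    ring
  · -- a > 1 + s : p > r
    have h1a : s < a - 1 := by linarith
    have hpr : r < p := by
      have key : (p - r) * (a - 1) = ((a - 1) - s) ^ 2 := by nlinarith [hpval, hs2]
      nlinarith [sq_nonneg ((a - 1) - s), key]
    rw [mp_core r p hr0 hpr]
    have hsqrtD : Real.sqrt (p ^ 2 - r ^ 2) = ((a - 1) ^ 2 - y) / (a - 1) := by
      have h1a' : (0:ℝ) < a - 1 := by linarith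
      rw [hD_eq, Real.sqrt_sq (le_of_lt (div_pos hq h1a'))]
    rw [hsqrtD, hD_eq, hrdef]
    have h4 : (2 * s) ^ 2 = 4 * y := by rw [mul_pow]; rw [hs2]; ring
    rw [h4]
    have hπ : (π : ℝ) ≠ 0 := Real.pi_ne_zero
    have hqne : (a - 1) ^ 2 - y ≠ 0 := ne_of_gt hq
    have hyne : y ≠ 0 := ne_of_gt hy0
    field_simp
    ring
end

section
/- Let 0 < y < 1 and let a > 0 with a ∉ [1−√y, 1+√y]; set φ(a) = a + ya/(a−1). Then m₆(φ(a)) = ∫ x²/(φ(a)−x)⁴ dF_y(x) = (a−1)⁴[(a−1+y)² + a²y] / ((a−1)² − y)⁵. -/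
open MeasureTheory Real

/-- Polynomial part of the antiderivative. -/
noncomputable def mpN (m r d x : ℝ) : ℝ :=
  ((2*d^3 - 5*r^2*d - m*d^2 - 2*m*r^2) * (x-m)^2
    + 3*(d^2+r^2)*(r^2+m*d) * (x-m)
    + (-2*r^2*d^3 - r^4*d - 5*m*r^2*d^2 + 2*m*r^4)) / (6*(d^2-r^2)^2)

noncomputable def mpN' (m r d x : ℝ) : ℝ :=
  (2*(2*d^3 - 5*r^2*d - m*d^2 - 2*m*r^2) * (x-m)
    + 3*(d^2+r^2)*(r^2+m*d)) / (6*(d^2-r^2)^2)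

/-- The antiderivative of `x ↦ x √((x-(m-r))((m+r)-x)) / (m+d-x)⁴`. -/
noncomputable def mpF (m r d P x : ℝ) : ℝ :=
  mpN m r d x * Real.sqrt ((x-(m-r))*((m+r)-x)) / (m+d-x)^3
  + (-(r^2*(m*d+r^2))/(2*(d^2-r^2)^2*P)) * Real.arcsin ((r^2 - d*(x-m))/(r*(m+d-x)))

lemma mp_core_poly (m r d x : ℝ) (hp : d^2 - r^2 ≠ 0) :
    (mpN' m r d x * ((x-(m-r))*((m+r)-x)) + mpN m r d x * (m-x)) * (m+d-x)
      + 3 * mpN m r d x * ((x-(m-r))*((m+r)-x))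
      + (r^2*(m*d+r^2)/(2*(d^2-r^2)^2)) * (m+d-x)^3
      = x * ((x-(m-r))*((m+r)-x)) := by
  unfold mpN mpN'
  field_simp
  ring

set_option maxRecDepth 8000 in
set_option maxHeartbeats 1600000 in
lemma mp_hasDerivAt (m r d P : ℝ) (hr : 0 < r) (hP2 : P ^ 2 = d ^ 2 - r ^ 2)
    (hdP : 0 < d * P) {x : ℝ} (hx1 : m - r < x) (hx2 : x < m + r) :
    HasDerivAt (mpF m r d P)
      (x * Real.sqrt ((x-(m-r))*((m+r)-x)) / (m+d-x)^4) x := by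
  have hP0 : P ≠ 0 := by rintro rfl; simp at hdP
  have hp_pos : 0 < d^2 - r^2 := by rw [← hP2]; positivity
  have hp : d^2 - r^2 ≠ 0 := hp_pos.ne'
  have hq_pos : 0 < (x-(m-r))*((m+r)-x) := mul_pos (by linarith) (by linarith)
  have hS_pos : 0 < Real.sqrt ((x-(m-r))*((m+r)-x)) := Real.sqrt_pos.mpr hq_pos
  set S := Real.sqrt ((x-(m-r))*((m+r)-x)) with hSdef
  have hS2 : S^2 = (x-(m-r))*((m+r)-x) := Real.sq_sqrt hq_pos.le
  have hPX : 0 < P * (m+d-x) := by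
    rcases mul_pos_iff.mp hdP with ⟨hd, hP⟩ | ⟨hd, hP⟩
    · have : r < d := by nlinarith
      exact mul_pos hP (by linarith)
    · have : d < -r := by nlinarith
      exact mul_pos_of_neg_of_neg hP (by linarith)
  have hX0 : m + d - x ≠ 0 := by
    intro h; rw [h, mul_zero] at hPX; exact lt_irrefl 0 hPX
  -- derivative of the N part
  have hone : HasDerivAt (fun t : ℝ => t - m) 1 x := (hasDerivAt_id x).sub_const m
  have hN : HasDerivAt (mpN m r d) (mpN' m r d x) x := by
    unfold mpN mpN'
    apply HasDerivAt.div_const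
    have := (((hone.pow 2).const_mul (2*d^3 - 5*r^2*d - m*d^2 - 2*m*r^2)).add
      (hone.const_mul (3*(d^2+r^2)*(r^2+m*d)))).add_const
      (-2*r^2*d^3 - r^4*d - 5*m*r^2*d^2 + 2*m*r^4)
    refine this.congr_deriv ?_
    ring
  -- derivative of the sqrt part
  have hq' : HasDerivAt (fun t => (t-(m-r))*((m+r)-t)) (2*(m-x)) x := by
    have h := ((hasDerivAt_id x).sub_const (m-r)).mul ((hasDerivAt_id x).const_sub (m+r))
    simp only [id_eq] at h
    refine h.congr_deriv ?_
    ring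
  have hS : HasDerivAt (fun t => Real.sqrt ((t-(m-r))*((m+r)-t))) (2*(m-x)/(2*S)) x :=
    hq'.sqrt hq_pos.ne'
  -- derivative of the denominator
  have hX : HasDerivAt (fun t => (m+d-t)^3) (3*(m+d-x)^2*(-1)) x := by
    have h := ((hasDerivAt_id x).const_sub (m+d)).pow 3
    simp only [id_eq] at h
    refine h.congr_deriv ?_
    norm_num
  have hpart1 : HasDerivAt (fun t => mpN m r d t * Real.sqrt ((t-(m-r))*((m+r)-t)) / (m+d-t)^3)
      (((mpN' m r d x * S + mpN m r d x * (2*(m-x)/(2*S))) * (m+d-x)^3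
        - mpN m r d x * S * (3*(m+d-x)^2*(-1))) / ((m+d-x)^3)^2) x :=
    (hN.mul hS).div hX (pow_ne_zero 3 hX0)
  -- derivative of the arcsin part
  have hnum : HasDerivAt (fun t => r^2 - d*(t-m)) (-d) x := by
    have := (hone.const_mul d).const_sub (r^2)
    refine this.congr_deriv ?_
    ring
  have hden : HasDerivAt (fun t => r*(m+d-t)) (-r) x := by
    have := ((hasDerivAt_id x).const_sub (m+d)).const_mul r
    refine this.congr_deriv ?_
    ring
  have hu : HasDerivAt (fun t => (r^2 - d*(t-m))/(r*(m+d-t)))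
      (((-d)*(r*(m+d-x)) - (r^2-d*(x-m))*(-r))/(r*(m+d-x))^2) x :=
    hnum.div hden (mul_ne_zero hr.ne' hX0)
  have hBpos : 0 < (r*(m+d-x))^2 := by positivity
  have hu2 : ((r^2 - d*(x-m))/(r*(m+d-x)))^2 < 1 := by
    rw [div_pow, div_lt_one hBpos]
    nlinarith [mul_pos hp_pos hq_pos]
  have hne1 : (r^2 - d*(x-m))/(r*(m+d-x)) ≠ -1 := by
    intro h; rw [h] at hu2; norm_num at hu2
  have hne2 : (r^2 - d*(x-m))/(r*(m+d-x)) ≠ 1 := by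
    intro h; rw [h] at hu2; norm_num at hu2
  have harcsin := (Real.hasDerivAt_arcsin hne1 hne2).comp x hu
  have hpart2 : HasDerivAt
      (fun t => (-(r^2*(m*d+r^2))/(2*(d^2-r^2)^2*P)) * Real.arcsin ((r^2 - d*(t-m))/(r*(m+d-t))))
      ((-(r^2*(m*d+r^2))/(2*(d^2-r^2)^2*P)) *
        (1 / Real.sqrt (1 - ((r^2 - d*(x-m))/(r*(m+d-x)))^2) *
          (((-d)*(r*(m+d-x)) - (r^2-d*(x-m))*(-r))/(r*(m+d-x))^2))) x := by
    exact (harcsin.const_mul _)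
  have htot := hpart1.add hpart2
  -- now identify the derivative value
  unfold mpF
  refine htot.congr_deriv ?_
  -- value equality
  have hsq : Real.sqrt (1 - ((r^2 - d*(x-m))/(r*(m+d-x)))^2)
      = P*(m+d-x)*S/(r*(m+d-x)^2) := by
    have e1 : 1 - ((r^2 - d*(x-m))/(r*(m+d-x)))^2
        = (P^2 * S^2)/((r*(m+d-x))^2) := by
      rw [hS2, hP2]
      field_simp
      ring
    have e2 : (P^2 * S^2)/((r*(m+d-x))^2) = (P*(m+d-x)*S/(r*(m+d-x)^2))^2 := by
      field_simp
    rw [e1, e2, Real.sqrt_sq]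
    exact div_nonneg (mul_nonneg hPX.le hS_pos.le) (by positivity)
  rw [hsq]
  have huval : ((-d)*(r*(m+d-x)) - (r^2-d*(x-m))*(-r))/(r*(m+d-x))^2
      = -P^2/(r*(m+d-x)^2) := by
    rw [hP2]; field_simp; ring
  rw [huval]
  have harc2 : (1 / (P*(m+d-x)*S/(r*(m+d-x)^2))) * (-P^2/(r*(m+d-x)^2))
      = -P/((m+d-x)*S) := by
    field_simp
  -- final rational identity using the core polynomial identity
  have hpoly := mp_core_poly m r d x hp
  rw [← hS2] at hpoly
  clear_value S
  clear hsq huval hS2 hSdef harc2 hu2 hq_pos hS hq' htot hpart1 hpart2 harcsin hu hnum hden hN hone hBpos hne1 hne2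
  have e3 : -(r ^ 2 * (m * d + r ^ 2)) / (2 * (d ^ 2 - r ^ 2) ^ 2 * P) *
        (1 / (P * (m + d - x) * S / (r * (m + d - x) ^ 2)) * (-P ^ 2 / (r * (m + d - x) ^ 2)))
      = (r ^ 2 * (m * d + r ^ 2) / (2 * (d ^ 2 - r ^ 2) ^ 2) * (m + d - x) ^ 3)
          * (1 / (S * (m + d - x) ^ 4)) := by
    field_simp
  have e4 : ((mpN' m r d x * S + mpN m r d x * (2 * (m - x) / (2 * S))) * (m + d - x) ^ 3 -
          mpN m r d x * S * (3 * (m + d - x) ^ 2 * -1)) / ((m + d - x) ^ 3) ^ 2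
      = ((mpN' m r d x * S ^ 2 + mpN m r d x * (m - x)) * (m + d - x) + 3 * mpN m r d x * S ^ 2)
          * (1 / (S * (m + d - x) ^ 4)) := by
    field_simp
    ring
  rw [e3, e4, ← add_mul, hpoly]
  field_simp

lemma mp_Xne (m r d P : ℝ) (hr : 0 < r) (hP2 : P ^ 2 = d ^ 2 - r ^ 2)
    (hdP : 0 < d * P) {x : ℝ} (hx1 : m - r ≤ x) (hx2 : x ≤ m + r) :
    m + d - x ≠ 0 := by
  have hP0 : P ≠ 0 := by rintro rfl; simp at hdP
  have hp_pos : 0 < d^2 - r^2 := by rw [← hP2]; positivity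
  rcases mul_pos_iff.mp hdP with ⟨hd, hP⟩ | ⟨hd, hP⟩
  · have : r < d := by nlinarith
    intro h; nlinarith
  · have : d < -r := by nlinarith
    intro h; nlinarith

set_option maxHeartbeats 1600000 in
lemma key_integral_s15 (m r d P : ℝ) (hr : 0 < r) (hP2 : P ^ 2 = d ^ 2 - r ^ 2)
    (hdP : 0 < d * P) :
    ∫ x in (m - r)..(m + r), x * Real.sqrt ((x-(m-r))*((m+r)-x)) / (m+d-x)^4
      = Real.pi * r^2 * (m*d + r^2) / (2*P^5) := by
  have hP0 : P ≠ 0 := by rintro rfl; simp at hdP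
  have hp_pos : 0 < d^2 - r^2 := by rw [← hP2]; positivity
  have hab : m - r ≤ m + r := by linarith
  have hXne : ∀ x ∈ Set.Icc (m-r) (m+r), m + d - x ≠ 0 := fun x hx =>
    mp_Xne m r d P hr hP2 hdP hx.1 hx.2
  have hdr : d - r ≠ 0 := by
    intro h
    have : m + d - (m + r) ≠ 0 := hXne (m+r) ⟨hab, le_refl _⟩
    apply this; linarith
  have hdr' : d + r ≠ 0 := by
    intro h
    have : m + d - (m - r) ≠ 0 := hXne (m-r) ⟨le_refl _, hab⟩
    apply this; linarith
  -- continuity of mpF on the closed interval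
  have hcont : ContinuousOn (mpF m r d P) (Set.Icc (m-r) (m+r)) := by
    unfold mpF
    apply ContinuousOn.add
    · apply ContinuousOn.div
      · exact (Continuous.mul (by unfold mpN; fun_prop)
          (Real.continuous_sqrt.comp (by fun_prop))).continuousOn
      · fun_prop
      · exact fun x hx => pow_ne_zero 3 (hXne x hx)
    · apply ContinuousOn.mul continuousOn_const
      apply Real.continuous_arcsin.comp_continuousOn
      apply ContinuousOn.div (by fun_prop) (by fun_prop)
      exact fun x hx => mul_ne_zero hr.ne' (hXne x hx)
  -- integrability of the integrand
  have hint : IntervalIntegrable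
      (fun x => x * Real.sqrt ((x-(m-r))*((m+r)-x)) / (m+d-x)^4) volume (m-r) (m+r) := by
    apply ContinuousOn.intervalIntegrable
    rw [Set.uIcc_of_le hab]
    apply ContinuousOn.div
    · exact (Continuous.mul continuous_id
        (Real.continuous_sqrt.comp (by fun_prop))).continuousOn
    · fun_prop
    · exact fun x hx => pow_ne_zero 4 (hXne x hx)
  rw [intervalIntegral.integral_eq_sub_of_hasDerivAt_of_le hab hcont
    (fun x hx => mp_hasDerivAt m r d P hr hP2 hdP hx.1 hx.2) hint]
  -- evaluate the endpoints
  have hend1 : mpF m r d P (m+r) = (-(r^2*(m*d+r^2))/(2*(d^2-r^2)^2*P)) * (-(Real.pi/2)) := by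
    unfold mpF
    rw [show (m+r-(m-r))*((m+r)-(m+r)) = 0 by ring, Real.sqrt_zero, mul_zero, zero_div, zero_add]
    rw [show (r^2 - d*((m+r)-m))/(r*(m+d-(m+r))) = -1 by
      rw [show r*(m+d-(m+r)) = r*(d-r) by ring]
      rw [div_eq_iff (mul_ne_zero hr.ne' hdr)]; ring]
    rw [Real.arcsin_neg_one]
  have hend2 : mpF m r d P (m-r) = (-(r^2*(m*d+r^2))/(2*(d^2-r^2)^2*P)) * (Real.pi/2) := by
    unfold mpF
    rw [show (m-r-(m-r))*((m+r)-(m-r)) = 0 by ring, Real.sqrt_zero, mul_zero, zero_div, zero_add]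
    rw [show (r^2 - d*((m-r)-m))/(r*(m+d-(m-r))) = 1 by
      rw [show r*(m+d-(m-r)) = r*(d+r) by ring]
      rw [div_eq_iff (mul_ne_zero hr.ne' hdr')]; ring]
    rw [Real.arcsin_one]
  rw [hend1, hend2]
  rw [show (2:ℝ)*P^5 = 2*(P^2)^2*P by ring, hP2]
  field_simp
  ring

/-- `m₆(φ(a)) = ∫ x²/(φ(a)−x)⁴ dF_y(x) = (a−1)⁴((a−1+y)² + a²y) / ((a−1)²−y)⁵`. -/
theorem mp_m6_phi (y a : ℝ) (hy0 : 0 < y) (hy1 : y < 1) (ha : 0 < a)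
    (hout : a ∉ Set.Icc (1 - Real.sqrt y) (1 + Real.sqrt y)) :
    (∫ x, x ^ 2 / (phiSpike y a - x) ^ 4 ∂mpLaw y) =
      (a - 1) ^ 4 * ((a - 1 + y) ^ 2 + a ^ 2 * y) / ((a - 1) ^ 2 - y) ^ 5 := by
  have hs0 : 0 < Real.sqrt y := Real.sqrt_pos.mpr hy0
  have hs1 : Real.sqrt y < 1 := by
    rw [show (1:ℝ) = Real.sqrt 1 by simp]
    exact Real.sqrt_lt_sqrt hy0.le hy1
  have hsy : Real.sqrt y ^ 2 = y := Real.sq_sqrt hy0.le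
  -- the spike is outside the support
  have ht2 : y < (a - 1)^2 := by
    rcases lt_or_ge a (1 - Real.sqrt y) with h | h
    · nlinarith
    · have h2 : 1 + Real.sqrt y < a := by
        by_contra hc
        push_neg at hc
        exact hout (Set.mem_Icc.mpr ⟨h, hc⟩)
      nlinarith
  have ht1 : a - 1 ≠ 0 := by
    intro h; rw [h] at ht2; simp at ht2; linarith
  set m : ℝ := 1 + y with hm
  set r : ℝ := 2 * Real.sqrt y with hrdef
  set d : ℝ := ((a-1)^2 + y)/(a-1) with hd
  set P : ℝ := ((a-1)^2 - y)/(a-1) with hP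
  have hr : 0 < r := by positivity
  have hr2 : r^2 = 4*y := by rw [hrdef, mul_pow, hsy]; norm_num
  have hP2 : P^2 = d^2 - r^2 := by
    rw [hP, hd, hr2, div_pow, div_pow, div_sub' (pow_ne_zero 2 ht1)]
    congr 1
    ring
  have ha1 : 0 < (a-1)^2 := by
    rcases ht1.lt_or_gt with h | h
    · nlinarith
    · nlinarith
  have hdP : 0 < d * P := by
    rw [hd, hP, div_mul_div_comm]
    exact div_pos (mul_pos (by nlinarith) (by nlinarith)) (by nlinarith)
  have hlam : phiSpike y a = m + d := by
    rw [phiSpike, hm, hd]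
    field_simp
    ring
  have hαe : (1 - Real.sqrt y)^2 = m - r := by rw [hm, hrdef]; linear_combination hsy
  have hβe : (1 + Real.sqrt y)^2 = m + r := by rw [hm, hrdef]; linear_combination hsy
  have hab : m - r ≤ m + r := by linarith
  have hα0 : 0 < m - r := by
    rw [← hαe]
    have h1 : 0 < 1 - Real.sqrt y := by linarith
    exact pow_pos h1 2
  -- collapse the measure
  have hmass : ENNReal.ofReal (1 - 1/y) = 0 := by
    rw [ENNReal.ofReal_eq_zero]
    have : 1 < 1/y := (one_lt_one_div hy0 hy1)
    linarith
  have hnn : ∀ x, 0 ≤ mpDensity y x := by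
    intro x
    rw [mpDensity]
    split_ifs with h
    · have hx0 : (0:ℝ) ≤ x := le_trans (sq_nonneg _) h.1
      exact div_nonneg (Real.sqrt_nonneg _) (mul_nonneg (by positivity) hx0)
    · exact le_refl 0
  have hmeas : Measurable fun x => (mpDensity y x).toNNReal := by
    apply Measurable.real_toNNReal
    unfold mpDensity
    refine Measurable.ite ?_ ?_ measurable_const
    · exact measurableSet_Icc (a := (1 - Real.sqrt y)^2) (b := (1 + Real.sqrt y)^2)
    · exact (Real.continuous_sqrt.comp (by fun_prop)).measurable.div (by fun_prop)
  have hXne : ∀ x, m - r ≤ x → x ≤ m + r → m + d - x ≠ 0 := fun x h1 h2 =>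
    mp_Xne m r d P hr hP2 hdP h1 h2
  calc (∫ x, x ^ 2 / (phiSpike y a - x) ^ 4 ∂mpLaw y)
      = ∫ x, x ^ 2 / (phiSpike y a - x) ^ 4
          ∂((volume : Measure ℝ).withDensity fun x => ENNReal.ofReal (mpDensity y x)) := by
        unfold mpLaw
        rw [hmass, zero_smul, zero_add]
    _ = ∫ x, ((mpDensity y x).toNNReal • (x ^ 2 / (phiSpike y a - x) ^ 4) : ℝ) := by
        exact integral_withDensity_eq_integral_smul hmeas _
    _ = ∫ x, mpDensity y x * (x ^ 2 / (phiSpike y a - x) ^ 4) := by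
        apply integral_congr_ae
        filter_upwards with x
        rw [NNReal.smul_def, Real.coe_toNNReal _ (hnn x), smul_eq_mul]
    _ = ∫ x in Set.Icc (m-r) (m+r),
          Real.sqrt ((x-(m-r))*((m+r)-x))/(2*Real.pi*y*x) * (x ^ 2 / (phiSpike y a - x) ^ 4) := by
        rw [← integral_indicator measurableSet_Icc]
        congr 1
        funext x
        rw [mpDensity, hαe, hβe, Set.indicator_apply]
        by_cases h : x ∈ Set.Icc (m-r) (m+r)
        · rw [if_pos (Set.mem_Icc.mp h), if_pos h]
        · rw [if_neg (fun hc => h (Set.mem_Icc.mpr hc)), if_neg h, zero_mul]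
    _ = ∫ x in (m-r)..(m+r),
          Real.sqrt ((x-(m-r))*((m+r)-x))/(2*Real.pi*y*x) * (x ^ 2 / (phiSpike y a - x) ^ 4) := by
        rw [intervalIntegral.integral_of_le hab, ← integral_Icc_eq_integral_Ioc]
    _ = ∫ x in (m-r)..(m+r),
          (2*Real.pi*y)⁻¹ * (x * Real.sqrt ((x-(m-r))*((m+r)-x)) / (m+d-x)^4) := by
        apply intervalIntegral.integral_congr
        intro x hx
        rw [Set.uIcc_of_le hab, Set.mem_Icc] at hx
        have hx0 : 0 < x := lt_of_lt_of_le hα0 hx.1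
        have hXx : m + d - x ≠ 0 := hXne x hx.1 hx.2
        rw [hlam]
        field_simp
    _ = (2*Real.pi*y)⁻¹ * ∫ x in (m-r)..(m+r),
          x * Real.sqrt ((x-(m-r))*((m+r)-x)) / (m+d-x)^4 := by
        exact intervalIntegral.integral_const_mul _ _
    _ = (2*Real.pi*y)⁻¹ * (Real.pi * r^2 * (m*d + r^2) / (2*P^5)) := by
        rw [key_integral_s15 m r d P hr hP2 hdP]
    _ = (a - 1) ^ 4 * ((a - 1 + y) ^ 2 + a ^ 2 * y) / ((a - 1) ^ 2 - y) ^ 5 := by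
        rw [hr2, hm, hd, hP]
        have hty : (a-1)^2 - y ≠ 0 := by intro h; nlinarith
        field_simp
        ring
end

section
/- Let 0 < y < 1 and let a_i, a_j > 0 with a_i ≠ a_j and a_i, a_j ∉ [1−√y, 1+√y]; set λ_i = φ(a_i), λ_j = φ(a_j), where φ(a) = a + ya/(a−1), and let m₁(λ) = ∫ x/(λ−x) dF_y(x). Then: (1) w(i,j) := 1 + y m₁(λ_i) + y m₁(λ_j) + y²(1+m₁(λ_i))(1+m₁(λ_j)) / [(λ_i − y(1+m₁(λ_i)))(λ_j − y(1+m₁(λ_j)))] equals (y+a_i−1)(y+a_j−1) / [(a_i−1)(a_j−1)]; and (2) with θ(i,j) := 1 + y m₁(λ_i) + y m₁(λ_j) + y( (λ_j/(λ_i−λ_j)) m₁(λ_j) + (λ_i/(λ_j−λ_i)) m₁(λ_i) ), one has θ(i,j) − w(i,j) = y(y+a_i−1)(y+a_j−1) / [ (a_i−1)(a_j−1)((a_i−1)(a_j−1) − y) ]. -/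
open MeasureTheory Real Set NNReal ENNReal

lemma ftc_core (a b lam E : ℝ) (hab : a < b)
    (hE2 : E ^ 2 = (lam - (a + b) / 2) ^ 2 - ((b - a) / 2) ^ 2)
    (hsgn : (0 < E ∧ b < lam) ∨ (E < 0 ∧ lam < a)) :
    ∫ x in a..b, Real.sqrt ((x - a) * (b - x)) / (lam - x)
      = Real.pi * (lam - (a + b) / 2 - E) := by
  set c : ℝ := (a + b) / 2 with hc
  set r : ℝ := (b - a) / 2 with hr
  have hr0 : 0 < r := by rw [hr]; linarith
  have hE0 : E ≠ 0 := by rcases hsgn with ⟨h, _⟩ | ⟨h, _⟩ <;> [exact ne_of_gt h; exact ne_of_lt h]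
  have hlx : ∀ x ∈ Set.Icc a b, 0 < E * (lam - x) := by
    intro x hx
    rcases hsgn with ⟨h1, h2⟩ | ⟨h1, h2⟩
    · exact mul_pos h1 (by linarith [hx.2])
    · exact mul_pos_of_neg_of_neg h1 (by linarith [hx.1])
  have hlxne : ∀ x ∈ Set.Icc a b, lam - x ≠ 0 := by
    intro x hx h
    have := hlx x hx; rw [h, mul_zero] at this; exact lt_irrefl 0 this
  set F : ℝ → ℝ := fun x => -Real.sqrt ((x - a) * (b - x)) + (lam - c) * Real.arcsin ((x - c) / r)
      - E * Real.arcsin (((lam - c) * (x - c) - r ^ 2) / (r * (lam - x))) with hF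
  have hcont : ContinuousOn F (Set.Icc a b) := by
    apply ContinuousOn.sub
    apply ContinuousOn.add
    · exact (Real.continuous_sqrt.comp (by continuity)).continuousOn.neg
    · exact (continuous_const.mul (Real.continuous_arcsin.comp (by continuity))).continuousOn
    · refine ContinuousOn.mul continuousOn_const (Real.continuous_arcsin.comp_continuousOn ?_)
      refine ContinuousOn.div (by fun_prop) (by fun_prop) ?_
      intro x hx h
      rcases mul_eq_zero.1 h with h | h
      · exact hr0.ne' h
      · exact hlxne x hx h
  have hderiv : ∀ x ∈ Set.Ioo a b, HasDerivAt F (Real.sqrt ((x - a) * (b - x)) / (lam - x)) x := by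
    intro x hx
    have hq : 0 < (x - a) * (b - x) := mul_pos (by linarith [hx.1]) (by linarith [hx.2])
    set s : ℝ := Real.sqrt ((x - a) * (b - x)) with hs
    have hs0 : 0 < s := Real.sqrt_pos.2 hq
    have hsq : s ^ 2 = (x - a) * (b - x) := Real.sq_sqrt hq.le
    have hxmem : x ∈ Set.Icc a b := Set.mem_Icc.2 ⟨hx.1.le, hx.2.le⟩
    have hlx' : 0 < E * (lam - x) := hlx x hxmem
    have hlne : lam - x ≠ 0 := hlxne x hxmem
    -- derivative of sqrt part
    have h1 : HasDerivAt (fun y : ℝ => Real.sqrt ((y - a) * (b - y)))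
        ((1 * (b - x) + (x - a) * (-1)) / (2 * s)) x := by
      have hq' : HasDerivAt (fun y : ℝ => (y - a) * (b - y)) (1 * (b - x) + (x - a) * (-1)) x := by
        exact ((hasDerivAt_id' x).sub_const a).mul ((hasDerivAt_id' x).const_sub b)
      exact hq'.sqrt (ne_of_gt hq)
    -- first arcsin
    have hxc : (x - c) ^ 2 < r ^ 2 := by rw [hc, hr]; nlinarith [hx.1, hx.2]
    have habs : |(x - c) / r| < 1 := by
      rw [abs_div, abs_of_pos hr0, div_lt_one hr0, ← Real.sqrt_sq_eq_abs]
      calc Real.sqrt ((x - c) ^ 2) < Real.sqrt (r ^ 2) := Real.sqrt_lt_sqrt (sq_nonneg _) hxc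
        _ = r := Real.sqrt_sq hr0.le
    have hne1 : (x - c) / r ≠ -1 := by intro h; rw [h] at habs; norm_num at habs
    have hne1' : (x - c) / r ≠ 1 := by intro h; rw [h] at habs; norm_num at habs
    have hsqrt1 : Real.sqrt (1 - ((x - c) / r) ^ 2) = s / r := by
      rw [show 1 - ((x - c) / r) ^ 2 = (s / r) ^ 2 by
        field_simp
        rw [hsq, hc, hr]; ring]
      exact Real.sqrt_sq (by positivity)
    have h2 : HasDerivAt (fun y : ℝ => Real.arcsin ((y - c) / r)) (1 / (s / r) * (1 / r)) x := by
      have hin : HasDerivAt (fun y : ℝ => (y - c) / r) (1 / r) x := by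
        simpa using ((hasDerivAt_id x).sub_const c).div_const r
      have := (Real.hasDerivAt_arcsin hne1 hne1').comp x hin
      rwa [hsqrt1] at this
    -- second arcsin
    set u : ℝ := ((lam - c) * (x - c) - r ^ 2) / (r * (lam - x)) with hu
    have hE2x : E ^ 2 = (lam - (a + b) / 2) ^ 2 - ((b - a) / 2) ^ 2 := by
      rw [hE2, hc, hr]
    have hone : 1 - u ^ 2 = (s * E / (r * (lam - x))) ^ 2 := by
      rw [hu]
      field_simp
      rw [hc, hr]
      linear_combination (-(E ^ 2)) * hsq + (-((x - a) * (b - x))) * hE2x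
    have hupos : 0 < 1 - u ^ 2 := by
      rw [hone]
      have : s * E / (r * (lam - x)) ≠ 0 := by
        apply div_ne_zero (mul_ne_zero hs0.ne' hE0) (mul_ne_zero hr0.ne' hlne)
      positivity
    have hun1 : u ≠ -1 := by intro h; rw [h] at hupos; norm_num at hupos
    have hun1' : u ≠ 1 := by intro h; rw [h] at hupos; norm_num at hupos
    have hEdiv : 0 ≤ E / (lam - x) := le_of_lt (by
      rcases mul_pos_iff.1 hlx' with ⟨h1', h2'⟩ | ⟨h1', h2'⟩
      · exact div_pos h1' h2'
      · exact div_pos_of_neg_of_neg h1' h2')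
    have hsqrt2 : Real.sqrt (1 - u ^ 2) = s * E / (r * (lam - x)) := by
      rw [hone]
      apply Real.sqrt_sq
      rw [show s * E / (r * (lam - x)) = (s / r) * (E / (lam - x)) by
        rw [div_mul_div_comm]]
      exact mul_nonneg (by positivity) hEdiv
    have h3 : HasDerivAt (fun y : ℝ => Real.arcsin (((lam - c) * (y - c) - r ^ 2) / (r * (lam - y))))
        (1 / (s * E / (r * (lam - x))) *
          (((lam - c) * 1 * (r * (lam - x)) - ((lam - c) * (x - c) - r ^ 2) * (r * (-1))) /
            (r * (lam - x)) ^ 2)) x := by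
      have hN : HasDerivAt (fun y : ℝ => (lam - c) * (y - c) - r ^ 2) ((lam - c) * 1) x := by
        simpa using (((hasDerivAt_id x).sub_const c).const_mul (lam - c)).sub_const (r ^ 2)
      have hD : HasDerivAt (fun y : ℝ => r * (lam - y)) (r * (-1)) x :=
        ((hasDerivAt_id x).const_sub lam).const_mul r
      have hin := hN.div hD (mul_ne_zero hr0.ne' hlne)
      have := (Real.hasDerivAt_arcsin hun1 hun1').comp x hin
      rwa [hsqrt2] at this
    have hsum := ((h1.neg.add (h2.const_mul (lam - c))).sub (h3.const_mul E))
    have e1 : -((1 * (b - x) + (x - a) * (-1)) / (2 * s)) = (x - c) / s := by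
      rw [hc]; field_simp; ring
    have e2 : 1 / (s / r) * (1 / r) = 1 / s := by
      field_simp
    have hNum : (lam - c) * 1 * (r * (lam - x)) - ((lam - c) * (x - c) - r ^ 2) * (r * (-1))
        = r * E ^ 2 := by
      linear_combination (-r) * hE2
    have e3 : 1 / (s * E / (r * (lam - x))) *
        (((lam - c) * 1 * (r * (lam - x)) - ((lam - c) * (x - c) - r ^ 2) * (r * (-1))) /
          (r * (lam - x)) ^ 2) = E / (s * (lam - x)) := by
      rw [hNum]
      field_simp
    have key : (x - c) / s + (lam - c) * (1 / s) - E * (E / (s * (lam - x))) = s / (lam - x) := by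
      field_simp
      rw [hc]
      linear_combination (-1) * hsq + (-1) * hE2x
    have goalval : Real.sqrt ((x - a) * (b - x)) / (lam - x)
        = -((1 * (b - x) + (x - a) * (-1)) / (2 * s)) + (lam - c) * (1 / (s / r) * (1 / r)) -
          E * (1 / (s * E / (r * (lam - x))) *
            (((lam - c) * 1 * (r * (lam - x)) - ((lam - c) * (x - c) - r ^ 2) * (r * (-1))) /
              (r * (lam - x)) ^ 2)) := by
      rw [e2, e3, e1]
      exact key.symm
    rw [goalval]
    exact hsum
  -- endpoint values and FTC
  have hint : IntervalIntegrable (fun x => Real.sqrt ((x - a) * (b - x)) / (lam - x)) volume a b := by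
    apply ContinuousOn.intervalIntegrable
    rw [Set.uIcc_of_le hab.le]
    exact ContinuousOn.div (Real.continuous_sqrt.comp
      ((continuous_id.sub continuous_const).mul (continuous_const.sub continuous_id))).continuousOn
      ((continuous_const.sub continuous_id)).continuousOn hlxne
  have hftc := intervalIntegral.integral_eq_sub_of_hasDeriv_right_of_le hab.le hcont
    (fun x hx => (hderiv x hx).hasDerivWithinAt) hint
  rw [hftc, hF]
  have hb0 : Real.sqrt ((b - a) * (b - b)) = 0 := by simp
  have ha0 : Real.sqrt ((a - a) * (b - a)) = 0 := by simp
  have hba2 : ((b - a) / 2 : ℝ) ≠ 0 := by positivity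
  have hbc : (b - c) / r = 1 := by
    rw [hc, hr, div_eq_one_iff_eq hba2]; ring
  have hac : (a - c) / r = -1 := by
    rw [hc, hr, div_eq_iff hba2]; ring
  have hub : ((lam - c) * (b - c) - r ^ 2) / (r * (lam - b)) = 1 := by
    have h1 : lam - b ≠ 0 := hlxne b (Set.mem_Icc.2 ⟨hab.le, le_refl b⟩)
    rw [div_eq_one_iff_eq (mul_ne_zero hr0.ne' h1), hc, hr]; ring
  have hua : ((lam - c) * (a - c) - r ^ 2) / (r * (lam - a)) = -1 := by
    have h1 : lam - a ≠ 0 := hlxne a (Set.mem_Icc.2 ⟨le_refl a, hab.le⟩)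
    rw [div_eq_iff (mul_ne_zero hr0.ne' h1), hc, hr]; ring
  simp only [hb0, ha0, hbc, hac, hub, hua, Real.arcsin_one, Real.arcsin_neg_one]
  ring

lemma mul_aux (C xx L S : ℝ) (hC : C ≠ 0) (hx : xx ≠ 0) (hL : L ≠ 0) :
    S / (C * xx) * (xx / L) = C⁻¹ * (S / L) := by
  field_simp

/-- `m₁(λ) = ∫ x/(λ−x) dF_y(x)`, the first Stieltjes-type moment of the
Marčenko–Pastur law `F_y`. -/
noncomputable def m1MP (y lam : ℝ) : ℝ := ∫ x, x / (lam - x) ∂mpLaw y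

/-- The constant `w(i,j)` in terms of `m₁` at `λ_i`, `λ_j`. -/
noncomputable def wAt (y lami lamj : ℝ) : ℝ :=
  1 + y * m1MP y lami + y * m1MP y lamj +
    y ^ 2 * (1 + m1MP y lami) * (1 + m1MP y lamj) /
      ((lami - y * (1 + m1MP y lami)) * (lamj - y * (1 + m1MP y lamj)))

/-- The constant `θ(i,j)` in terms of `m₁` at `λ_i`, `λ_j`. -/
noncomputable def thetaAt (y lami lamj : ℝ) : ℝ :=
  1 + y * m1MP y lami + y * m1MP y lamj +
    y * (lamj / (lami - lamj) * m1MP y lamj + lami / (lamj - lami) * m1MP y lami)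

set_option maxHeartbeats 2000000 in
lemma m1_eval (y a : ℝ) (hy0 : 0 < y) (hy1 : y < 1) (ha0 : 0 < a)
    (ha : a ∉ Set.Icc (1 - Real.sqrt y) (1 + Real.sqrt y)) :
    m1MP y (phiSpike y a) = 1 / (a - 1) := by
  set sy : ℝ := Real.sqrt y with hsy
  have hsy0 : 0 < sy := Real.sqrt_pos.2 hy0
  have hsy1 : sy < 1 := by
    rw [hsy, show (1:ℝ) = Real.sqrt 1 by simp]
    exact Real.sqrt_lt_sqrt hy0.le hy1
  have hsy2 : sy ^ 2 = y := Real.sq_sqrt hy0.le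
  set al : ℝ := (1 - sy) ^ 2 with hal
  set be : ℝ := (1 + sy) ^ 2 with hbe
  have hal0 : 0 < al := by
    have h1 : (0:ℝ) < 1 - sy := by linarith
    rw [hal]; positivity
  have hab : al < be := by rw [hal, hbe]; nlinarith
  -- spike location
  have ht0 : a - 1 ≠ 0 := by
    simp only [Set.mem_Icc, not_and_or, not_le] at ha
    rcases ha with h | h <;> intro hc <;> nlinarith
  set lam : ℝ := phiSpike y a with hlam
  set E : ℝ := ((a - 1) ^ 2 - y) / (a - 1) with hE
  have hlamval : lam = a + y * a / (a - 1) := by rw [hlam, phiSpike]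
  have hsgn : (0 < E ∧ be < lam) ∨ (E < 0 ∧ lam < al) := by
    simp only [Set.mem_Icc, not_and_or, not_le] at ha
    rcases ha with h | h
    · -- a < 1 - sy, so a - 1 < -sy < 0
      right
      constructor
      · rw [hE]
        apply div_neg_of_pos_of_neg
        · nlinarith
        · linarith
      · have : lam - al = (a - 1 + sy) ^ 2 / (a - 1) := by
          rw [hlamval, hal]
          field_simp
          linear_combination (-a) * hsy2
        have hneg : lam - al < 0 := by
          rw [this]
          apply div_neg_of_pos_of_neg
          · nlinarith
          · linarith
        linarith
    · -- 1 + sy < a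
      left
      constructor
      · rw [hE]
        apply div_pos
        · nlinarith
        · linarith
      · have : lam - be = (a - 1 - sy) ^ 2 / (a - 1) := by
          rw [hlamval, hbe]
          field_simp
          linear_combination (-a) * hsy2
        have hpos : 0 < lam - be := by
          rw [this]
          apply div_pos
          · nlinarith
          · linarith
        linarith
  have hE2 : E ^ 2 = (lam - (al + be) / 2) ^ 2 - ((be - al) / 2) ^ 2 := by
    rw [hE, hlamval, hal, hbe, ← hsy2]
    field_simp
    ring
  have hlxne : ∀ x ∈ Set.Icc al be, lam - x ≠ 0 := by
    intro x hx
    rcases hsgn with ⟨_, h2⟩ | ⟨_, h2⟩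
    · have := hx.2; intro hc; nlinarith
    · have := hx.1; intro hc; nlinarith
  have hatom : ENNReal.ofReal (1 - 1 / y) = 0 := by
    rw [ENNReal.ofReal_eq_zero]
    have h1 : 1 ≤ 1 / y := by rw [le_div_iff₀ hy0]; linarith
    linarith
  have hlaw : mpLaw y = (volume : Measure ℝ).withDensity fun x => ENNReal.ofReal (mpDensity y x) := by
    rw [mpLaw, hatom, zero_smul, zero_add]
  have hmd : Measurable (mpDensity y) := by
    unfold mpDensity
    refine Measurable.ite ?_ ?_ measurable_const
    · exact (measurableSet_le measurable_const measurable_id).inter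
        (measurableSet_le measurable_id measurable_const)
    · exact (((measurable_id.sub_const _).mul
        (measurable_const.sub measurable_id)).sqrt).div (measurable_const.mul measurable_id)
  have hnn : ∀ x, 0 ≤ mpDensity y x := by
    intro x
    unfold mpDensity
    simp only [← hsy]
    split_ifs with h
    · have hx0 : 0 < x := lt_of_lt_of_le (by nlinarith [hsy0, hsy1]) h.1
      have hden : 0 < 2 * Real.pi * y * x :=
        mul_pos (mul_pos (mul_pos two_pos Real.pi_pos) hy0) hx0
      exact div_nonneg (Real.sqrt_nonneg _) hden.le
    · exact le_refl 0
  have hps : ∀ x, mpDensity y x * (x / (lam - x)) =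
      Set.indicator (Set.Icc al be)
        (fun x => (2 * Real.pi * y)⁻¹ * (Real.sqrt ((x - al) * (be - x)) / (lam - x))) x := by
    intro x
    have hcond : ((1 - Real.sqrt y) ^ 2 ≤ x ∧ x ≤ (1 + Real.sqrt y) ^ 2) ↔ x ∈ Set.Icc al be := by
      rw [Set.mem_Icc, hal, hbe, hsy]
    unfold mpDensity
    by_cases hx : x ∈ Set.Icc al be
    · rw [if_pos (hcond.2 hx), Set.indicator_of_mem hx]
      have hx0 : x ≠ 0 := (lt_of_lt_of_le hal0 hx.1).ne'
      have hlx : lam - x ≠ 0 := hlxne x hx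
      have hxa : x - (1 - Real.sqrt y) ^ 2 = x - al := by rw [hal, hsy]
      have hxb : (1 + Real.sqrt y) ^ 2 - x = be - x := by rw [hbe, hsy]
      rw [hxa, hxb]
      exact mul_aux (2 * Real.pi * y) x (lam - x) _
        (by positivity) hx0 hlx
    · rw [if_neg (fun hcc => hx (hcond.1 hcc)), Set.indicator_of_notMem hx, zero_mul]
  have step1 : m1MP y lam = ∫ x, mpDensity y x * (x / (lam - x)) := by
    rw [m1MP, hlaw]
    rw [show (fun x => ENNReal.ofReal (mpDensity y x))
        = fun x => (((mpDensity y x).toNNReal : ℝ≥0) : ℝ≥0∞) from rfl]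
    rw [integral_withDensity_eq_integral_smul (hmd.real_toNNReal)]
    congr 1
    funext x
    rw [NNReal.smul_def, Real.coe_toNNReal _ (hnn x), smul_eq_mul]
  rw [step1]
  have step2 : ∫ x, mpDensity y x * (x / (lam - x))
      = ∫ x in al..be, (2 * Real.pi * y)⁻¹ * (Real.sqrt ((x - al) * (be - x)) / (lam - x)) := by
    rw [show (fun x => mpDensity y x * (x / (lam - x))) = Set.indicator (Set.Icc al be)
        (fun x => (2 * Real.pi * y)⁻¹ * (Real.sqrt ((x - al) * (be - x)) / (lam - x)))
      from funext hps]
    rw [integral_indicator measurableSet_Icc, integral_Icc_eq_integral_Ioc,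
      ← intervalIntegral.integral_of_le hab.le]
  rw [step2, intervalIntegral.integral_const_mul, ftc_core al be lam E hab hE2 hsgn]
  rw [hlamval, hE, hal, hbe, ← hsy2]
  have hpi := Real.pi_ne_zero
  have hsyne : sy ≠ 0 := hsy0.ne'
  field_simp
  ring

/-- Closed forms of the covariance constants `w(i,j)` and `θ(i,j) − w(i,j)` evaluated at
`λ_i = φ(a_i)`, `λ_j = φ(a_j)` for two distinct spikes `a_i ≠ a_j` outside the bulk. -/
theorem covariance_constants_closed_form (y ai aj : ℝ) (hy0 : 0 < y) (hy1 : y < 1)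
    (hai : 0 < ai) (haj : 0 < aj) (hne : ai ≠ aj)
    (hi : ai ∉ Set.Icc (1 - Real.sqrt y) (1 + Real.sqrt y))
    (hj : aj ∉ Set.Icc (1 - Real.sqrt y) (1 + Real.sqrt y)) :
    wAt y (phiSpike y ai) (phiSpike y aj) =
        (y + ai - 1) * (y + aj - 1) / ((ai - 1) * (aj - 1)) ∧
    thetaAt y (phiSpike y ai) (phiSpike y aj) - wAt y (phiSpike y ai) (phiSpike y aj) =
        y * (y + ai - 1) * (y + aj - 1) /
          ((ai - 1) * (aj - 1) * ((ai - 1) * (aj - 1) - y)) := by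
  have hmi : m1MP y (phiSpike y ai) = 1 / (ai - 1) := m1_eval y ai hy0 hy1 hai hi
  have hmj : m1MP y (phiSpike y aj) = 1 / (aj - 1) := m1_eval y aj hy0 hy1 haj hj
  have hsy0 : 0 < Real.sqrt y := Real.sqrt_pos.2 hy0
  have hsy2 : Real.sqrt y ^ 2 = y := Real.sq_sqrt hy0.le
  simp only [Set.mem_Icc, not_and_or, not_le] at hi hj
  have hi1 : ai - 1 ≠ 0 := by rcases hi with h | h <;> intro hc <;> nlinarith
  have hj1 : aj - 1 ≠ 0 := by rcases hj with h | h <;> intro hc <;> nlinarith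
  have hprod : (ai - 1) * (aj - 1) - y ≠ 0 := by
    rcases hi with h | h <;> rcases hj with h' | h' <;> intro hc <;> nlinarith
  have hane : ai - aj ≠ 0 := sub_ne_zero.2 hne
  have hAi : phiSpike y ai - y * (1 + 1 / (ai - 1)) = ai := by
    rw [phiSpike]; field_simp; ring
  have hAj : phiSpike y aj - y * (1 + 1 / (aj - 1)) = aj := by
    rw [phiSpike]; field_simp; ring
  have hij : phiSpike y ai - phiSpike y aj
      = (ai - aj) * ((ai - 1) * (aj - 1) - y) / ((ai - 1) * (aj - 1)) := by
    rw [phiSpike, phiSpike]; field_simp; ring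
  have hji : phiSpike y aj - phiSpike y ai
      = -((ai - aj) * ((ai - 1) * (aj - 1) - y)) / ((ai - 1) * (aj - 1)) := by
    rw [phiSpike, phiSpike]; field_simp; ring
  constructor
  · rw [wAt, hmi, hmj, hAi, hAj]
    field_simp
    ring
  · rw [thetaAt, wAt, hmi, hmj, hAi, hAj, hij, hji, phiSpike, phiSpike]
    field_simp
    ring
end
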